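/- arXiv:2407.18081 — 6 statements merged into one kernel-verified Lean document; each statement's English description precedes it below -/
import Mathlib

section
/- Let x : [0,t_f] → ℝ be twice continuously differentiable, let K, N ≥ 1, and let 0 = t_0 < t_1 < ... < t_K = t_f be knots satisfying t_k − t_{k−1} ≤ C_t/K for all k, where C_t > 0. Let x_M be the composite Bernstein approximant of x with K segments of degree N. Then for all t ∈ [0,t_f], |x_M(t) − x(t)| ≤ A/(K²N), where A = (C_t²/8)·sup_{τ∈[0,t_f]} |x''(τ)|. -/
/-- Bernstein basis polynomial of degree `N`, index `j`, on `[a,b]`: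
`b_{j,N}(t) = (N choose j) (t-a)^j (b-t)^(N-j) / (b-a)^N`. -/
noncomputable def bern (a b : ℝ) (N j : ℕ) (t : ℝ) : ℝ :=
  (N.choose j : ℝ) * (t - a) ^ j * (b - t) ^ (N - j) / (b - a) ^ N

/-- The polynomial piece of the composite Bernstein approximant on a segment `[a,b]`:
`Σ_{j=0}^N x(a + j(b−a)/N) b_{j,N}(t)`. -/
noncomputable def bernApprox (x : ℝ → ℝ) (a b : ℝ) (N : ℕ) (t : ℝ) : ℝ :=
  ∑ j ∈ Finset.range (N + 1), x (a + (j : ℝ) * (b - a) / (N : ℝ)) * bern a b N j t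


open Set Finset Polynomial

lemma bern_eval (a b : ℝ) (hab : a < b) (N : ℕ) {j : ℕ} (hj : j ≤ N) (t : ℝ) :
    bern a b N j t = (bernsteinPolynomial ℝ N j).eval ((t - a) / (b - a)) := by
  have hba : (b - a) ≠ 0 := sub_ne_zero.2 hab.ne'
  have h1 : (1 : ℝ) - (t - a) / (b - a) = (b - t) / (b - a) := by field_simp; ring
  have h2 : (b - a) ^ N = (b - a) ^ j * (b - a) ^ (N - j) := by
    rw [← pow_add, Nat.add_sub_cancel' hj]
  rw [bernsteinPolynomial]
  simp only [eval_mul, eval_pow, eval_natCast, eval_X, eval_sub, eval_one, h1, div_pow]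
  rw [bern, h2]
  field_simp

section sums
variable {a b : ℝ} (N : ℕ) (t : ℝ)

lemma bp_sum : ∑ j ∈ Finset.range (N+1), (bernsteinPolynomial ℝ N j).eval ((t-a)/(b-a)) = 1 := by
  rw [← Polynomial.eval_finset_sum, bernsteinPolynomial.sum, eval_one]

lemma bp_sum_smul : ∑ j ∈ Finset.range (N+1), (j : ℝ) * (bernsteinPolynomial ℝ N j).eval ((t-a)/(b-a))
    = N * ((t-a)/(b-a)) := by
  have := congrArg (Polynomial.eval ((t-a)/(b-a))) (bernsteinPolynomial.sum_smul ℝ N)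
  simpa [Polynomial.eval_finset_sum, nsmul_eq_mul] using this

lemma bp_variance : ∑ j ∈ Finset.range (N+1),
    ((N : ℝ) * ((t-a)/(b-a)) - j)^2 * (bernsteinPolynomial ℝ N j).eval ((t-a)/(b-a))
    = N * ((t-a)/(b-a)) * (1 - (t-a)/(b-a)) := by
  have := congrArg (Polynomial.eval ((t-a)/(b-a))) (bernsteinPolynomial.variance ℝ N)
  simpa [Polynomial.eval_finset_sum, nsmul_eq_mul] using this

lemma bern_sum (hab : a < b) : ∑ j ∈ Finset.range (N+1), bern a b N j t = 1 := by
  rw [Finset.sum_congr rfl fun j hj => bern_eval a b hab N (Nat.lt_succ_iff.mp (Finset.mem_range.mp hj)) t]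
  exact bp_sum N t

lemma bern_sum_linear (hab : a < b) (hN : 1 ≤ N) :
    ∑ j ∈ Finset.range (N+1), (a + j*(b-a)/N - t) * bern a b N j t = 0 := by
  have hba : (b - a) ≠ 0 := sub_ne_zero.2 hab.ne'
  have hN' : (N : ℝ) ≠ 0 := Nat.cast_ne_zero.2 (by omega)
  have key : ∀ j ∈ Finset.range (N+1), (a + j*(b-a)/N - t) * bern a b N j t
      = ((b-a)/N) * ((j : ℝ) * (bernsteinPolynomial ℝ N j).eval ((t-a)/(b-a)))
        - ((b-a)/N * (N * ((t-a)/(b-a)))) * (bernsteinPolynomial ℝ N j).eval ((t-a)/(b-a)) := by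
    intro j hj
    rw [bern_eval a b hab N (Nat.lt_succ_iff.mp (Finset.mem_range.mp hj)) t]
    have : a + j*(b-a)/N - t = (b-a)/N * (j : ℝ) - (b-a)/N * (N * ((t-a)/(b-a))) := by
      field_simp; ring
    rw [this]; ring
  rw [Finset.sum_congr rfl key, Finset.sum_sub_distrib, ← Finset.mul_sum, ← Finset.mul_sum,
    bp_sum_smul, bp_sum]
  ring

lemma bern_sum_sq (hab : a < b) (hN : 1 ≤ N) :
    ∑ j ∈ Finset.range (N+1), (a + j*(b-a)/N - t)^2 * bern a b N j t
      = (b-a)^2 * (((t-a)/(b-a)) * (1 - (t-a)/(b-a))) / N := by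
  have hba : (b - a) ≠ 0 := sub_ne_zero.2 hab.ne'
  have hN' : (N : ℝ) ≠ 0 := Nat.cast_ne_zero.2 (by omega)
  have key : ∀ j ∈ Finset.range (N+1), (a + j*(b-a)/N - t)^2 * bern a b N j t
      = ((b-a)/N)^2 * (((N:ℝ) * ((t-a)/(b-a)) - j)^2
          * (bernsteinPolynomial ℝ N j).eval ((t-a)/(b-a))) := by
    intro j hj
    rw [bern_eval a b hab N (Nat.lt_succ_iff.mp (Finset.mem_range.mp hj)) t]
    have : a + j*(b-a)/N - t = (b-a)/N * ((j:ℝ) - N * ((t-a)/(b-a))) := by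
      field_simp; ring
    rw [this]; ring
  rw [Finset.sum_congr rfl key, ← Finset.mul_sum, bp_variance]
  generalize (t-a)/(b-a) = s
  field_simp
end sums


open Set intervalIntegral MeasureTheory

lemma abs_integral_abs_linear (M c : ℝ) (hM : 0 ≤ M) :
    |∫ v in (0:ℝ)..c, M * abs v| = M * c ^ 2 / 2 := by
  rcases le_or_gt 0 c with hc | hc
  · have h1 : ∫ v in (0:ℝ)..c, M * abs v = ∫ v in (0:ℝ)..c, M * v := by
      apply integral_congr
      intro v hv
      rw [Set.uIcc_of_le hc] at hv
      simp only []
      rw [abs_of_nonneg hv.1]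
    rw [h1, intervalIntegral.integral_const_mul, integral_id]
    have : M * ((c ^ 2 - 0 ^ 2) / 2) = M * c ^ 2 / 2 := by ring
    rw [this, abs_of_nonneg (by positivity)]
  · have h1 : ∫ v in (0:ℝ)..c, M * abs v = ∫ v in (0:ℝ)..c, M * (-v) := by
      apply integral_congr
      intro v hv
      rw [Set.uIcc_of_ge hc.le] at hv
      simp only []
      rw [abs_of_nonpos hv.2]
    rw [h1]
    have h2 : ∫ v in (0:ℝ)..c, M * (-v) = -(M * c^2/2) := by
      simp only [mul_neg]
      rw [intervalIntegral.integral_neg, intervalIntegral.integral_const_mul, integral_id]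
      ring
    rw [h2, abs_neg, abs_of_nonneg (by positivity)]

lemma taylor_two_sided {tf : ℝ} (htf : 0 < tf) {x : ℝ → ℝ}
    (hx : ContDiffOn ℝ 2 x (Set.Icc 0 tf)) {M : ℝ}
    (hM : ∀ u ∈ Set.Icc 0 tf, |iteratedDerivWithin 2 x (Set.Icc 0 tf) u| ≤ M) :
    ∀ t ∈ Set.Icc 0 tf, ∀ s ∈ Set.Icc 0 tf,
      |x s - x t - derivWithin x (Set.Icc 0 tf) t * (s - t)| ≤ M / 2 * (s - t) ^ 2 := by
  set S := Set.Icc (0:ℝ) tf with hSdef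
  have hS : UniqueDiffOn ℝ S := uniqueDiffOn_Icc htf
  set f' := derivWithin x S with hf'def
  set f'' := iteratedDerivWithin 2 x S with hf''def
  have hfd : ∀ u ∈ S, HasDerivWithinAt x (f' u) S u := fun u hu =>
    ((hx.differentiableOn (by norm_num)) u hu).hasDerivWithinAt
  have hC1 : ContDiffOn ℝ 1 f' S := hx.derivWithin hS (by norm_num)
  have hf''eq : ∀ u ∈ S, f'' u = derivWithin f' S u := by
    intro u hu
    rw [hf''def, show (2:ℕ) = 1 + 1 from rfl, iteratedDerivWithin_succ]
    exact derivWithin_congr (fun v hv => congrFun iteratedDerivWithin_one v)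
      (congrFun iteratedDerivWithin_one u)
  have hfd2 : ∀ u ∈ S, HasDerivWithinAt f' (f'' u) S u := by
    intro u hu
    rw [hf''eq u hu]
    exact ((hC1.differentiableOn (by norm_num)) u hu).hasDerivWithinAt
  have hM0 : 0 ≤ M := le_trans (abs_nonneg _) (hM 0 ⟨le_rfl, htf.le⟩)
  have lip : ∀ u ∈ S, ∀ v ∈ S, |f' u - f' v| ≤ M * |u - v| := by
    intro u hu v hv
    have := (convex_Icc (0:ℝ) tf).norm_image_sub_le_of_norm_hasDerivWithin_le
      hfd2 (fun w hw => by simpa using hM w hw) hv hu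
    simpa [Real.norm_eq_abs] using this
  intro t ht s hs
  have hsub : Set.uIcc t s ⊆ S := by
    rw [hSdef, ← Set.uIcc_of_le htf.le]
    exact Set.uIcc_subset_uIcc (by rw [Set.uIcc_of_le htf.le]; exact ht)
      (by rw [Set.uIcc_of_le htf.le]; exact hs)
  have hf'cont : ContinuousOn f' S := hC1.continuousOn
  -- FTC
  have ftc : ∫ u in t..s, f' u = x s - x t := by
    apply integral_eq_sub_of_hasDeriv_right (hx.continuousOn.mono hsub)
    · intro u hu
      have huS : S ∈ nhds u := by
        apply Icc_mem_nhds
        · exact lt_of_le_of_lt (le_min ht.1 hs.1) hu.1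
        · exact lt_of_lt_of_le hu.2 (max_le ht.2 hs.2)
      exact (((hfd u (hsub (Set.Ioo_subset_Icc_self hu))).hasDerivAt
        huS)).hasDerivWithinAt
    · exact (hf'cont.mono hsub).intervalIntegrable
  have key : x s - x t - f' t * (s - t) = ∫ u in t..s, (f' u - f' t) := by
    rw [integral_sub ((hf'cont.mono hsub).intervalIntegrable) intervalIntegrable_const,
      ftc, intervalIntegral.integral_const, smul_eq_mul]
    ring
  rw [key]
  have hbd : |∫ u in t..s, (f' u - f' t)| ≤ |∫ u in t..s, M * abs (u - t)| := by
    rw [← Real.norm_eq_abs (∫ u in t..s, (f' u - f' t))]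
    apply intervalIntegral.norm_integral_le_abs_of_norm_le
    · filter_upwards [ae_restrict_mem measurableSet_uIoc] with u hu
      rw [Real.norm_eq_abs]
      exact lip u (hsub (Set.uIoc_subset_uIcc hu)) t (hsub Set.left_mem_uIcc)
    · exact (Continuous.intervalIntegrable (by continuity) _ _)
  have hcomp : ∫ u in t..s, M * abs (u - t) = ∫ v in (0:ℝ)..(s - t), M * abs v := by
    have := integral_comp_sub_right (a := t) (b := s) (fun v => M * abs v) t
    rw [sub_self] at this
    exact this
  calc |∫ u in t..s, (f' u - f' t)| ≤ |∫ u in t..s, M * abs (u - t)| := hbd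
    _ = M * (s - t)^2 / 2 := by rw [hcomp, abs_integral_abs_linear _ _ hM0]
    _ = M / 2 * (s - t)^2 := by ring


/-- Lemma 1: for `x ∈ C²([0,t_f])`, knots `0 = T 0 < … < T K = t_f`
with `T (k+1) − T k ≤ C_t/K`, the composite Bernstein approximant `x_M` (given on
each segment `[T k, T (k+1)]` by `bernApprox x (T k) (T (k+1)) N`) satisfies
`|x_M(t) − x(t)| ≤ A/(K²N)` for all `t ∈ [0,t_f]`, with
`A = (C_t²/8) sup_{τ∈[0,t_f]} |x''(τ)|`. -/
theorem composite_bernstein_function_bound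
    (tf Ct : ℝ) (htf : 0 < tf) (hCt : 0 < Ct)
    (K N : ℕ) (hK : 1 ≤ K) (hN : 1 ≤ N)
    (T : ℕ → ℝ) (hT0 : T 0 = 0) (hTK : T K = tf)
    (hmono : ∀ k < K, T k < T (k + 1))
    (hsize : ∀ k < K, T (k + 1) - T k ≤ Ct / (K : ℝ))
    (x : ℝ → ℝ) (hx : ContDiffOn ℝ 2 x (Set.Icc 0 tf)) :
    ∀ k < K, ∀ t ∈ Set.Icc (T k) (T (k + 1)),
      |bernApprox x (T k) (T (k + 1)) N t - x t|
        ≤ (Ct ^ 2 / 8 *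
            sSup ((fun τ => |iteratedDerivWithin 2 x (Set.Icc 0 tf) τ|) '' Set.Icc 0 tf))
          / ((K : ℝ) ^ 2 * (N : ℝ)) := by
  have hmono' : ∀ j ≤ K, ∀ i ≤ j, T i ≤ T j := by
    intro j
    induction j with
    | zero => intro _ i hi; have : i = 0 := by omega
              rw [this]
    | succ n ih =>
      intro hn i hi
      rcases Nat.lt_succ_iff_lt_or_eq.mp (Nat.lt_succ_of_le hi) with h | h
      · exact le_trans (ih (by omega) i (by omega)) (hmono n (by omega)).le
      · rw [h]
  set M := sSup ((fun τ => |iteratedDerivWithin 2 x (Set.Icc 0 tf) τ|) '' Set.Icc 0 tf) with hMdef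
  have hcont2 : ContinuousOn (iteratedDerivWithin 2 x (Set.Icc 0 tf)) (Set.Icc 0 tf) :=
    hx.continuousOn_iteratedDerivWithin le_rfl (uniqueDiffOn_Icc htf)
  have hbdd : BddAbove ((fun τ => |iteratedDerivWithin 2 x (Set.Icc 0 tf) τ|) '' Set.Icc 0 tf) :=
    (isCompact_Icc.image_of_continuousOn hcont2.abs).bddAbove
  have hMle : ∀ u ∈ Set.Icc (0:ℝ) tf, |iteratedDerivWithin 2 x (Set.Icc 0 tf) u| ≤ M :=
    fun u hu => le_csSup hbdd ⟨u, hu, rfl⟩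
  have hM0 : (0:ℝ) ≤ M := le_trans (abs_nonneg _) (hMle 0 ⟨le_rfl, htf.le⟩)
  have taylor := taylor_two_sided htf hx hMle
  intro k hk t ht
  set a := T k with hadef
  set b := T (k+1) with hbdef
  have hab : a < b := hmono k hk
  have ha0 : (0:ℝ) ≤ a := by rw [hadef, ← hT0]; exact hmono' k hk.le 0 (Nat.zero_le k)
  have hbtf : b ≤ tf := by rw [hbdef, ← hTK]; exact hmono' K le_rfl (k+1) (by omega)
  have habS : Set.Icc a b ⊆ Set.Icc (0:ℝ) tf := Set.Icc_subset_Icc ha0 hbtf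
  have htS : t ∈ Set.Icc (0:ℝ) tf := habS ht
  have hNpos : (0:ℝ) < N := by exact_mod_cast Nat.lt_of_lt_of_le Nat.zero_lt_one hN
  have hKpos : (0:ℝ) < K := by exact_mod_cast Nat.lt_of_lt_of_le Nat.zero_lt_one hK
  set f' := derivWithin x (Set.Icc 0 tf) with hf'def
  -- nodes
  have hnode : ∀ j ∈ Finset.range (N+1), a + (j:ℝ)*(b-a)/N ∈ Set.Icc a b := by
    intro j hj
    have hjN : (j:ℝ) ≤ N := by exact_mod_cast Nat.lt_succ_iff.mp (Finset.mem_range.mp hj)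
    have hba := sub_nonneg.2 hab.le
    constructor
    · have : (0:ℝ) ≤ (j:ℝ)*(b-a)/N :=
        div_nonneg (mul_nonneg (Nat.cast_nonneg j) hba) hNpos.le
      linarith
    · rw [← sub_nonneg]
      have heq : b - (a + (j:ℝ)*(b-a)/N) = ((N:ℝ) - j) * (b - a) / N := by field_simp; ring
      rw [heq]
      have : (0:ℝ) ≤ (N:ℝ) - j := by linarith
      positivity
  have hBnn : ∀ j ∈ Finset.range (N+1), 0 ≤ bern a b N j t := by
    intro j hj
    rw [bern]
    apply div_nonneg _ (pow_nonneg (sub_nonneg.2 hab.le) N)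
    exact mul_nonneg (mul_nonneg (Nat.cast_nonneg _) (pow_nonneg (sub_nonneg.2 ht.1) j))
      (pow_nonneg (sub_nonneg.2 ht.2) _)
  -- decomposition
  have step1 : bernApprox x a b N t - x t
      = ∑ j ∈ Finset.range (N+1),
          (x (a + (j:ℝ)*(b-a)/N) - x t - f' t * ((a + (j:ℝ)*(b-a)/N) - t)) * bern a b N j t := by
    have expand : ∀ j ∈ Finset.range (N+1),
        (x (a + (j:ℝ)*(b-a)/N) - x t - f' t * ((a + (j:ℝ)*(b-a)/N) - t)) * bern a b N j t
        = x (a + (j:ℝ)*(b-a)/N) * bern a b N j t - x t * bern a b N j t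
          - f' t * (((a + (j:ℝ)*(b-a)/N) - t) * bern a b N j t) := by
      intro j hj; ring
    rw [Finset.sum_congr rfl expand, Finset.sum_sub_distrib, Finset.sum_sub_distrib,
      ← Finset.mul_sum, ← Finset.mul_sum, bern_sum N t hab, bern_sum_linear N t hab hN,
      bernApprox]
    ring
  rw [step1]
  have step2 : |∑ j ∈ Finset.range (N+1),
        (x (a + (j:ℝ)*(b-a)/N) - x t - f' t * ((a + (j:ℝ)*(b-a)/N) - t)) * bern a b N j t|
      ≤ ∑ j ∈ Finset.range (N+1), M / 2 * ((a + (j:ℝ)*(b-a)/N) - t)^2 * bern a b N j t := by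
    refine (Finset.abs_sum_le_sum_abs _ _).trans (Finset.sum_le_sum ?_)
    intro j hj
    rw [abs_mul, abs_of_nonneg (hBnn j hj)]
    exact mul_le_mul_of_nonneg_right
      (taylor t htS (a + (j:ℝ)*(b-a)/N) (habS (hnode j hj))) (hBnn j hj)
  have step3 : ∑ j ∈ Finset.range (N+1), M / 2 * ((a + (j:ℝ)*(b-a)/N) - t)^2 * bern a b N j t
      = M / 2 * ((b-a)^2 * (((t-a)/(b-a)) * (1 - (t-a)/(b-a))) / N) := by
    rw [Finset.sum_congr rfl (fun (j : ℕ) (hj : j ∈ Finset.range (N+1)) => by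
        ring : ∀ j ∈ Finset.range (N+1), M / 2 * ((a + (j:ℝ)*(b-a)/N) - t)^2 * bern a b N j t
          = M / 2 * (((a + (j:ℝ)*(b-a)/N) - t)^2 * bern a b N j t)),
      ← Finset.mul_sum, bern_sum_sq N t hab hN]
  -- final arithmetic
  have hs0 : 0 ≤ (t-a)/(b-a) := div_nonneg (sub_nonneg.2 ht.1) (sub_nonneg.2 hab.le)
  have hs1 : (t-a)/(b-a) ≤ 1 := by
    rw [div_le_one (by linarith)]
    linarith [ht.2]
  have hquarter : ((t-a)/(b-a)) * (1 - (t-a)/(b-a)) ≤ 1/4 := by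
    nlinarith [sq_nonneg ((t-a)/(b-a) - 1/2)]
  have hba2 : (b-a)^2 ≤ (Ct/K)^2 := by
    apply pow_le_pow_left₀ (sub_nonneg.2 hab.le)
    exact hsize k hk
  have hprod : (b-a)^2 * (((t-a)/(b-a)) * (1 - (t-a)/(b-a))) ≤ (Ct/K)^2 * (1/4) :=
    mul_le_mul hba2 hquarter (mul_nonneg hs0 (by linarith)) (by positivity)
  calc |∑ j ∈ Finset.range (N+1),
        (x (a + (j:ℝ)*(b-a)/N) - x t - f' t * ((a + (j:ℝ)*(b-a)/N) - t)) * bern a b N j t|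
      ≤ ∑ j ∈ Finset.range (N+1), M / 2 * ((a + (j:ℝ)*(b-a)/N) - t)^2 * bern a b N j t := step2
    _ = M / 2 * ((b-a)^2 * (((t-a)/(b-a)) * (1 - (t-a)/(b-a))) / N) := step3
    _ ≤ M / 2 * ((Ct/K)^2 * (1/4) / N) := by
        apply mul_le_mul_of_nonneg_left _ (by linarith)
        apply div_le_div_of_nonneg_right hprod hNpos.le
    _ = (Ct ^ 2 / 8 * M) / ((K : ℝ) ^ 2 * (N : ℝ)) := by
        field_simp
        ring
end

section
/- Let x : [0,t_f] → ℝ be twice continuously differentiable, let K, N ≥ 1, and let 0 = t_0 < t_1 < ... < t_K = t_f be knots satisfying t_k − t_{k−1} ≤ C_t/K for all k, where C_t > 0. Let x_M be the composite Bernstein approximant of x with K segments of degree N. Then |∫₀^{t_f} x_M(t) dt − ∫₀^{t_f} x(t) dt| ≤ C/(K²N), where C = (C_t³/8)·sup_{τ∈[0,t_f]}|x''(τ)|. -/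
open Set intervalIntegral MeasureTheory

lemma bern_eq {a b : ℝ} (hab : a < b) {N j : ℕ} (hj : j ≤ N) (t : ℝ) :
    bern a b N j t = (bernsteinPolynomial ℝ N j).eval ((t - a) / (b - a)) := by
  have hL : (0:ℝ) < b - a := sub_pos.mpr hab
  have hL' : (b - a) ≠ 0 := ne_of_gt hL
  simp only [bern, bernsteinPolynomial, Polynomial.eval_mul, Polynomial.eval_pow,
    Polynomial.eval_natCast, Polynomial.eval_sub, Polynomial.eval_one, Polynomial.eval_X]
  have h1 : (1 : ℝ) - (t - a)/(b - a) = (b - t)/(b - a) := by field_simp; ring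
  rw [h1, div_pow, div_pow]
  rw [show (b-a)^N = (b-a)^j * (b-a)^(N-j) by rw [← pow_add, Nat.add_sub_cancel' hj]]
  field_simp

-- evaluated polynomial identities
lemma evalsum (N : ℕ) (p : ℝ) :
    ∑ j ∈ Finset.range (N+1), (bernsteinPolynomial ℝ N j).eval p = 1 := by
  have := bernsteinPolynomial.sum ℝ N
  have h2 := congrArg (Polynomial.eval p) this
  simpa [Polynomial.eval_finset_sum] using h2

lemma evalsum1 (N : ℕ) (p : ℝ) :
    ∑ j ∈ Finset.range (N+1), (j:ℝ) * (bernsteinPolynomial ℝ N j).eval p = N * p := by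
  have := bernsteinPolynomial.sum_smul ℝ N
  have h2 := congrArg (Polynomial.eval p) this
  simpa [Polynomial.eval_finset_sum] using h2

lemma evalsum2 (N : ℕ) (p : ℝ) :
    ∑ j ∈ Finset.range (N+1), ((N:ℝ)*p - (j:ℝ))^2 * (bernsteinPolynomial ℝ N j).eval p
      = N * p * (1 - p) := by
  have := bernsteinPolynomial.variance ℝ N
  have h2 := congrArg (Polynomial.eval p) this
  simpa [Polynomial.eval_finset_sum] using h2

lemma sum_bern {a b : ℝ} (hab : a < b) (N : ℕ) (t : ℝ) :
    ∑ j ∈ Finset.range (N+1), bern a b N j t = 1 := by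
  rw [Finset.sum_congr rfl (fun j hj => bern_eq hab (Nat.lt_succ_iff.mp (Finset.mem_range.mp hj)) t)]
  exact evalsum N _

lemma sum_bern_lin {a b : ℝ} (hab : a < b) {N : ℕ} (hN : N ≠ 0) (t : ℝ) :
    ∑ j ∈ Finset.range (N+1), (a + (j:ℝ)*(b-a)/(N:ℝ) - t) * bern a b N j t = 0 := by
  have hL : (b - a) ≠ 0 := ne_of_gt (sub_pos.mpr hab)
  have hNR : (N:ℝ) ≠ 0 := Nat.cast_ne_zero.mpr hN
  rw [Finset.sum_congr rfl (fun j hj => by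
    rw [bern_eq hab (Nat.lt_succ_iff.mp (Finset.mem_range.mp hj)) t])]
  have key : ∀ j ∈ Finset.range (N+1),
      (a + (j:ℝ)*(b-a)/(N:ℝ) - t) * (bernsteinPolynomial ℝ N j).eval ((t-a)/(b-a))
      = (b-a)/(N:ℝ) * ((j:ℝ) * (bernsteinPolynomial ℝ N j).eval ((t-a)/(b-a)))
        + (a - t) * (bernsteinPolynomial ℝ N j).eval ((t-a)/(b-a)) := fun j _ => by ring
  rw [Finset.sum_congr rfl key, Finset.sum_add_distrib, ← Finset.mul_sum, ← Finset.mul_sum,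
    evalsum, evalsum1]
  field_simp
  ring

lemma sum_bern_sq {a b : ℝ} (hab : a < b) {N : ℕ} (hN : N ≠ 0) (t : ℝ) :
    ∑ j ∈ Finset.range (N+1), (a + (j:ℝ)*(b-a)/(N:ℝ) - t)^2 * bern a b N j t
      = (b-a)^2 * (((t-a)/(b-a)) * (1 - (t-a)/(b-a))) / (N:ℝ) := by
  have hL : (b - a) ≠ 0 := ne_of_gt (sub_pos.mpr hab)
  have hNR : (N:ℝ) ≠ 0 := Nat.cast_ne_zero.mpr hN
  rw [Finset.sum_congr rfl (fun j hj => by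
    rw [bern_eq hab (Nat.lt_succ_iff.mp (Finset.mem_range.mp hj)) t])]
  have key : ∀ j ∈ Finset.range (N+1),
      (a + (j:ℝ)*(b-a)/(N:ℝ) - t)^2 * (bernsteinPolynomial ℝ N j).eval ((t-a)/(b-a))
      = ((b-a)/(N:ℝ))^2 * (((N:ℝ)*((t-a)/(b-a)) - (j:ℝ))^2
          * (bernsteinPolynomial ℝ N j).eval ((t-a)/(b-a))) := by
    intro j _
    have : (a + (j:ℝ)*(b-a)/(N:ℝ) - t)^2 = ((b-a)/(N:ℝ))^2 * ((N:ℝ)*((t-a)/(b-a)) - (j:ℝ))^2 := by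
      field_simp; ring
    rw [this, mul_assoc]
  rw [Finset.sum_congr rfl key, ← Finset.mul_sum, evalsum2]
  field_simp

lemma ftc_seg {s : Set ℝ} {f f' : ℝ → ℝ}
    (hf : ∀ w ∈ s, HasDerivWithinAt f (f' w) s w)
    (hcont : ContinuousOn f' s) {u v : ℝ} (huv : Icc u v ⊆ s) (hle : u ≤ v) :
    ∫ w in u..v, f' w = f v - f u := by
  apply integral_eq_sub_of_hasDeriv_right_of_le hle
  · exact fun w hw => ((hf w (huv hw)).differentiableWithinAt.mono huv).continuousWithinAt
  · intro w hw
    have h1 : HasDerivWithinAt f (f' w) (Icc u v) w := (hf w (huv (Ioo_subset_Icc_self hw))).mono huv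
    exact (h1.hasDerivAt (Icc_mem_nhds hw.1 hw.2)).hasDerivWithinAt
  · exact (hcont.mono huv).intervalIntegrable_of_Icc hle

lemma taylor_quad {s : Set ℝ} (hs : Convex ℝ s) {f f' : ℝ → ℝ} {M : ℝ} (hM : 0 ≤ M)
    (hf : ∀ w ∈ s, HasDerivWithinAt f (f' w) s w)
    (hcont : ContinuousOn f' s)
    (hlip : ∀ w ∈ s, ∀ z ∈ s, |f' w - f' z| ≤ M * |w - z|)
    {u v : ℝ} (hu : u ∈ s) (hv : v ∈ s) :
    |f v - f u - f' u * (v - u)| ≤ M / 2 * (v - u) ^ 2 := by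
  rcases le_total u v with hle | hle
  · have hIcc : Icc u v ⊆ s := hs.ordConnected.out hu hv
    have hftc := ftc_seg hf hcont hIcc hle
    have hint : IntervalIntegrable f' volume u v := (hcont.mono hIcc).intervalIntegrable_of_Icc hle
    have heq : f v - f u - f' u * (v - u) = ∫ w in u..v, (f' w - f' u) := by
      rw [integral_sub hint intervalIntegrable_const, hftc, intervalIntegral.integral_const,
        smul_eq_mul]
      ring
    rw [heq]
    have hbd : ∀ᵐ w ∂(volume.restrict (Set.uIoc u v)), ‖f' w - f' u‖ ≤ M * (w - u) := by
      rw [ae_restrict_iff' measurableSet_uIoc]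
      filter_upwards with w hw
      rw [uIoc_of_le hle] at hw
      have hws : w ∈ s := hIcc ⟨le_of_lt hw.1, hw.2⟩
      calc ‖f' w - f' u‖ ≤ M * |w - u| := hlip w hws u hu
        _ = M * (w - u) := by rw [abs_of_nonneg (sub_nonneg.mpr (le_of_lt hw.1))]
    have hgint : IntervalIntegrable (fun w => M * (w - u)) volume u v :=
      (continuous_const.mul (continuous_id.sub continuous_const)).intervalIntegrable u v
    have h2 := norm_integral_le_abs_of_norm_le hbd hgint
    have hcomp : (∫ w in u..v, M * (w - u)) = M / 2 * (v - u) ^ 2 := by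
      rw [intervalIntegral.integral_const_mul, integral_sub intervalIntegrable_id intervalIntegrable_const,
        integral_id, intervalIntegral.integral_const, smul_eq_mul]
      ring
    rw [hcomp, abs_of_nonneg (by positivity)] at h2
    exact h2
  · have hIcc : Icc v u ⊆ s := hs.ordConnected.out hv hu
    have hftc := ftc_seg hf hcont hIcc hle
    have hint : IntervalIntegrable f' volume v u := (hcont.mono hIcc).intervalIntegrable_of_Icc hle
    have heq : f v - f u - f' u * (v - u) = -(∫ w in v..u, (f' w - f' u)) := by
      rw [integral_sub hint intervalIntegrable_const, hftc, intervalIntegral.integral_const,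
        smul_eq_mul]
      ring
    rw [heq, abs_neg]
    have hbd : ∀ᵐ w ∂(volume.restrict (Set.uIoc v u)), ‖f' w - f' u‖ ≤ M * (u - w) := by
      rw [ae_restrict_iff' measurableSet_uIoc]
      filter_upwards with w hw
      rw [uIoc_of_le hle] at hw
      have hws : w ∈ s := hIcc ⟨le_of_lt hw.1, hw.2⟩
      calc ‖f' w - f' u‖ ≤ M * |w - u| := hlip w hws u hu
        _ = M * (u - w) := by rw [abs_sub_comm, abs_of_nonneg (sub_nonneg.mpr hw.2)]
    have hgint : IntervalIntegrable (fun w => M * (u - w)) volume v u :=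
      (continuous_const.mul (continuous_const.sub continuous_id)).intervalIntegrable v u
    have h2 := norm_integral_le_abs_of_norm_le hbd hgint
    have hcomp : (∫ w in v..u, M * (u - w)) = M / 2 * (v - u) ^ 2 := by
      rw [intervalIntegral.integral_const_mul, integral_sub intervalIntegrable_const intervalIntegrable_id,
        integral_id, intervalIntegral.integral_const, smul_eq_mul]
      ring
    rw [hcomp, abs_of_nonneg (by positivity)] at h2
    exact h2

lemma bern_nonneg {a b : ℝ} (hab : a < b) {N j : ℕ} {t : ℝ} (ht : t ∈ Icc a b) :
    0 ≤ bern a b N j t := by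
  have h1 : (0:ℝ) ≤ t - a := sub_nonneg.mpr ht.1
  have h2 : (0:ℝ) ≤ b - t := sub_nonneg.mpr ht.2
  have h3 : (0:ℝ) < b - a := sub_pos.mpr hab
  unfold bern
  positivity

lemma node_mem {a b : ℝ} (hab : a < b) {N j : ℕ} (hj : j ≤ N) (hN : N ≠ 0) :
    a + (j:ℝ)*(b-a)/(N:ℝ) ∈ Icc a b := by
  have h3 : (0:ℝ) < b - a := sub_pos.mpr hab
  have hNpos : (0:ℝ) < (N:ℝ) := by positivity
  constructor
  · have : (0:ℝ) ≤ (j:ℝ)*(b-a)/(N:ℝ) := by positivity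
    linarith
  · have hjN : (j:ℝ) ≤ (N:ℝ) := Nat.cast_le.mpr hj
    have : (j:ℝ)*(b-a)/(N:ℝ) ≤ (b-a) := by
      rw [div_le_iff₀ hNpos]
      nlinarith
    linarith

lemma bernApprox_pointwise {s : Set ℝ} (hs : Convex ℝ s) {x f' : ℝ → ℝ} {M : ℝ} (hM : 0 ≤ M)
    (hd1 : ∀ w ∈ s, HasDerivWithinAt x (f' w) s w) (hcont : ContinuousOn f' s)
    (hlip : ∀ w ∈ s, ∀ z ∈ s, |f' w - f' z| ≤ M * |w - z|)
    {a b : ℝ} (hab : a < b) (hsub : Icc a b ⊆ s) {N : ℕ} (hN : N ≠ 0)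
    {t : ℝ} (ht : t ∈ Icc a b) :
    |bernApprox x a b N t - x t| ≤ M * (b-a)^2 / (8 * N) := by
  have h3 : (0:ℝ) < b - a := sub_pos.mpr hab
  have hNpos : (0:ℝ) < (N:ℝ) := by positivity
  have hts : t ∈ s := hsub ht
  have key : bernApprox x a b N t - x t
      = ∑ j ∈ Finset.range (N+1),
          (x (a + (j:ℝ)*(b-a)/(N:ℝ)) - x t - f' t * (a + (j:ℝ)*(b-a)/(N:ℝ) - t))
            * bern a b N j t := by
    have e0 := sum_bern hab N t
    have e1 := sum_bern_lin hab hN t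
    unfold bernApprox
    simp only [sub_mul]
    rw [Finset.sum_sub_distrib, Finset.sum_sub_distrib, ← Finset.mul_sum, e0, mul_one]
    have e2 : ∑ j ∈ Finset.range (N+1),
        f' t * (a + (j:ℝ)*(b-a)/(N:ℝ) - t) * bern a b N j t = 0 := by
      simp only [mul_assoc]
      rw [← Finset.mul_sum]
      rw [show ∑ j ∈ Finset.range (N+1), (a + (j:ℝ)*(b-a)/(N:ℝ) - t) * bern a b N j t = 0 from e1, mul_zero]
    rw [e2]
    ring
  rw [key]
  calc |∑ j ∈ Finset.range (N+1),
          (x (a + (j:ℝ)*(b-a)/(N:ℝ)) - x t - f' t * (a + (j:ℝ)*(b-a)/(N:ℝ) - t))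
            * bern a b N j t|
      ≤ ∑ j ∈ Finset.range (N+1),
          |(x (a + (j:ℝ)*(b-a)/(N:ℝ)) - x t - f' t * (a + (j:ℝ)*(b-a)/(N:ℝ) - t))
            * bern a b N j t| := Finset.abs_sum_le_sum_abs _ _
    _ ≤ ∑ j ∈ Finset.range (N+1),
          (M/2 * (a + (j:ℝ)*(b-a)/(N:ℝ) - t)^2) * bern a b N j t := by
        apply Finset.sum_le_sum
        intro j hj
        rw [abs_mul, abs_of_nonneg (bern_nonneg hab ht)]
        apply mul_le_mul_of_nonneg_right _ (bern_nonneg hab ht)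
        exact taylor_quad hs hM hd1 hcont hlip hts
          (hsub (node_mem hab (Nat.lt_succ_iff.mp (Finset.mem_range.mp hj)) hN))
    _ = M/2 * ((b-a)^2 * (((t-a)/(b-a)) * (1 - (t-a)/(b-a))) / (N:ℝ)) := by
        simp only [mul_assoc]
        rw [← Finset.mul_sum]
        congr 1
        simpa only [mul_assoc] using sum_bern_sq hab hN t
    _ ≤ M/2 * ((b-a)^2 * (1/4) / (N:ℝ)) := by
        have hp0 : (0:ℝ) ≤ (t-a)/(b-a) := div_nonneg (sub_nonneg.mpr ht.1) (le_of_lt h3)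
        have hp1 : (t-a)/(b-a) ≤ 1 := by
          rw [div_le_one h3]; linarith [ht.2]
        gcongr
        nlinarith [sq_nonneg ((t-a)/(b-a) - 1/2)]
    _ = M * (b-a)^2 / (8 * N) := by ring

lemma bern_continuous (a b : ℝ) (N j : ℕ) : Continuous (fun t => bern a b N j t) := by
  unfold bern
  exact (((continuous_const.mul ((continuous_id.sub continuous_const).pow j)).mul
    ((continuous_const.sub continuous_id).pow (N - j)))).div_const _

lemma bernApprox_continuous (x : ℝ → ℝ) (a b : ℝ) (N : ℕ) :
    Continuous (fun t => bernApprox x a b N t) := by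
  unfold bernApprox
  exact continuous_finset_sum _ (fun j _ => continuous_const.mul (bern_continuous a b N j))

lemma segment_bound {s : Set ℝ} (hs : Convex ℝ s) {x f' : ℝ → ℝ} {M : ℝ} (hM : 0 ≤ M)
    (hd1 : ∀ w ∈ s, HasDerivWithinAt x (f' w) s w) (hcont : ContinuousOn f' s)
    (hlip : ∀ w ∈ s, ∀ z ∈ s, |f' w - f' z| ≤ M * |w - z|)
    {a b : ℝ} (hab : a < b) (hsub : Icc a b ⊆ s) {N : ℕ} (hN : N ≠ 0) :
    |(∫ t in a..b, bernApprox x a b N t) - ∫ t in a..b, x t|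
      ≤ M * (b-a)^3 / (8 * N) := by
  have hxc : ContinuousOn x (Icc a b) :=
    (fun w hw => ((hd1 w (hsub hw)).differentiableWithinAt.mono hsub).continuousWithinAt)
  have hint1 : IntervalIntegrable (fun t => bernApprox x a b N t) volume a b :=
    (bernApprox_continuous x a b N).intervalIntegrable a b
  have hint2 : IntervalIntegrable x volume a b :=
    hxc.intervalIntegrable_of_Icc (le_of_lt hab)
  rw [← integral_sub hint1 hint2]
  have hbd := fun (t : ℝ) (ht : t ∈ Set.uIoc a b) =>
    bernApprox_pointwise hs hM hd1 hcont hlip hab hsub hN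
      (mem_Icc_of_Ioc (by rwa [uIoc_of_le (le_of_lt hab)] at ht))
  have := intervalIntegral.norm_integral_le_of_norm_le_const
    (C := M * (b-a)^2 / (8 * N)) (f := fun t => bernApprox x a b N t - x t) hbd
  rw [abs_of_pos (sub_pos.mpr hab)] at this
  calc |∫ t in a..b, (bernApprox x a b N t - x t)| ≤ M * (b-a)^2/(8*N) * (b-a) := this
    _ = M * (b-a)^3 / (8*N) := by ring

/-- Lemma 3: for `x ∈ C²([0,t_f])`, knots `0 = T 0 < … < T K = t_f`
with `T (k+1) − T k ≤ C_t/K`, the integral of the composite Bernstein approximant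
(i.e. the sum over the segments of the integrals of the pieces) satisfies
`|∫₀^{t_f} x_M − ∫₀^{t_f} x| ≤ C/(K²N)` with
`C = (C_t³/8) sup_{τ∈[0,t_f]} |x''(τ)|`. -/
theorem composite_bernstein_integral_bound
    (tf Ct : ℝ) (htf : 0 < tf) (hCt : 0 < Ct)
    (K N : ℕ) (hK : 1 ≤ K) (hN : 1 ≤ N)
    (T : ℕ → ℝ) (hT0 : T 0 = 0) (hTK : T K = tf)
    (hmono : ∀ k < K, T k < T (k + 1))
    (hsize : ∀ k < K, T (k + 1) - T k ≤ Ct / (K : ℝ))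
    (x : ℝ → ℝ) (hx : ContDiffOn ℝ 2 x (Set.Icc 0 tf)) :
    |(∑ k ∈ Finset.range K, ∫ t in (T k)..(T (k + 1)), bernApprox x (T k) (T (k + 1)) N t)
        - ∫ t in (0 : ℝ)..tf, x t|
      ≤ (Ct ^ 3 / 8 *
          sSup ((fun τ => |iteratedDerivWithin 2 x (Set.Icc 0 tf) τ|) '' Set.Icc 0 tf))
        / ((K : ℝ) ^ 2 * (N : ℝ)) := by
  have hNne : N ≠ 0 := Nat.one_le_iff_ne_zero.mp hN
  have hKpos : (0:ℝ) < (K:ℝ) := by exact_mod_cast Nat.lt_of_lt_of_le Nat.zero_lt_one hK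
  have hNpos : (0:ℝ) < (N:ℝ) := by exact_mod_cast Nat.lt_of_lt_of_le Nat.zero_lt_one hN
  -- monotonicity of knots
  have mono' : ∀ j, j ≤ K → ∀ i, i ≤ j → T i ≤ T j := by
    intro j
    induction j with
    | zero => intro _ i hi; interval_cases i; exact le_refl _
    | succ n ih =>
      intro hj i hi
      rcases Nat.lt_succ_iff_lt_or_eq.mp (Nat.lt_succ_of_le hi) with h | h
      · exact le_trans (ih (le_of_lt (Nat.lt_of_lt_of_le (Nat.lt_succ_self n) hj))
          i (Nat.lt_succ_iff.mp h)) (le_of_lt (hmono n (Nat.lt_of_succ_le hj)))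
      · rw [h]
  have hsub : ∀ k, k < K → Icc (T k) (T (k+1)) ⊆ Icc 0 tf := by
    intro k hk
    apply Icc_subset_Icc
    · rw [← hT0]; exact mono' k (le_of_lt hk) 0 (Nat.zero_le _)
    · rw [← hTK]; exact mono' K (le_refl _) (k+1) (Nat.succ_le_of_lt hk)
  -- analytic setup
  set s := Set.Icc (0:ℝ) tf with hsdef
  have hsu : UniqueDiffOn ℝ s := uniqueDiffOn_Icc htf
  set f' := derivWithin x s with hf'
  set M := sSup ((fun τ => |iteratedDerivWithin 2 x s τ|) '' s) with hM
  have hd1 : ∀ w ∈ s, HasDerivWithinAt x (f' w) s w := by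
    intro w hw
    exact (hx.differentiableOn (by norm_num) w hw).hasDerivWithinAt
  have hone : ∀ w ∈ s, iteratedDerivWithin 1 x s w = f' w := by
    intro w hw; exact congrFun iteratedDerivWithin_one w
  have hcont1 : ContinuousOn f' s := by
    have := hx.continuousOn_iteratedDerivWithin (m := 1) (by norm_num) hsu
    exact this.congr (fun w hw => (hone w hw).symm)
  have hd2 : ∀ w ∈ s, HasDerivWithinAt f' (iteratedDerivWithin 2 x s w) s w := by
    intro w hw
    have hdiff : DifferentiableOn ℝ (iteratedDerivWithin 1 x s) s :=
      hx.differentiableOn_iteratedDerivWithin (by norm_num) hsu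
    have h2 : iteratedDerivWithin 2 x s w = derivWithin (iteratedDerivWithin 1 x s) s w :=
      congrFun iteratedDerivWithin_succ w
    have h3 := (hdiff w hw).hasDerivWithinAt
    rw [← h2] at h3
    exact h3.congr (fun z hz => (hone z hz).symm) ((hone w hw).symm)
  have hcont2 : ContinuousOn (fun τ => |iteratedDerivWithin 2 x s τ|) s :=
    (hx.continuousOn_iteratedDerivWithin (m := 2) (by norm_num) hsu).abs
  have hbdd : BddAbove ((fun τ => |iteratedDerivWithin 2 x s τ|) '' s) :=
    (isCompact_Icc.image_of_continuousOn hcont2).bddAbove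
  have hMle : ∀ w ∈ s, |iteratedDerivWithin 2 x s w| ≤ M :=
    fun w hw => le_csSup hbdd ⟨w, hw, rfl⟩
  have hM0 : 0 ≤ M := le_trans (abs_nonneg _) (hMle 0 ⟨le_refl 0, le_of_lt htf⟩)
  have hlip : ∀ w ∈ s, ∀ z ∈ s, |f' w - f' z| ≤ M * |w - z| := by
    intro w hw z hz
    exact Convex.norm_image_sub_le_of_norm_hasDerivWithin_le hd2
      (fun y hy => hMle y hy) (convex_Icc 0 tf) hz hw
  -- split the integral of x
  have hxint : ∀ k, k < K → IntervalIntegrable x volume (T k) (T (k+1)) := by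
    intro k hk
    have hxc : ContinuousOn x (Icc (T k) (T (k+1))) :=
      fun w hw => ((hd1 w (hsub k hk hw)).differentiableWithinAt.mono (hsub k hk)).continuousWithinAt
    exact hxc.intervalIntegrable_of_Icc (le_of_lt (hmono k hk))
  have hsplit : ∑ k ∈ Finset.range K, (∫ t in (T k)..(T (k+1)), x t) = ∫ t in (0:ℝ)..tf, x t := by
    have := intervalIntegral.sum_integral_adjacent_intervals hxint
    rwa [hT0, hTK] at this
  rw [← hsplit, ← Finset.sum_sub_distrib]
  -- bound each term
  calc |∑ k ∈ Finset.range K,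
        ((∫ t in (T k)..(T (k+1)), bernApprox x (T k) (T (k+1)) N t) - ∫ t in (T k)..(T (k+1)), x t)|
      ≤ ∑ k ∈ Finset.range K,
        |(∫ t in (T k)..(T (k+1)), bernApprox x (T k) (T (k+1)) N t) - ∫ t in (T k)..(T (k+1)), x t| :=
        Finset.abs_sum_le_sum_abs _ _
    _ ≤ ∑ k ∈ Finset.range K, M * (Ct/(K:ℝ))^3 / (8 * N) := by
        apply Finset.sum_le_sum
        intro k hk
        have hk' := Finset.mem_range.mp hk
        calc |(∫ t in (T k)..(T (k+1)), bernApprox x (T k) (T (k+1)) N t)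
                - ∫ t in (T k)..(T (k+1)), x t|
            ≤ M * (T (k+1) - T k)^3 / (8 * N) :=
              segment_bound (convex_Icc 0 tf) hM0 hd1 hcont1 hlip (hmono k hk') (hsub k hk') hNne
          _ ≤ M * (Ct/(K:ℝ))^3 / (8 * N) := by
              have h1 : (0:ℝ) ≤ T (k+1) - T k := le_of_lt (sub_pos.mpr (hmono k hk'))
              gcongr
              exact hsize k hk'
    _ = (Ct ^ 3 / 8 * M) / ((K : ℝ) ^ 2 * (N : ℝ)) := by
        rw [Finset.sum_const, Finset.card_range, nsmul_eq_mul]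
        field_simp
end

section
/- Let a < b be real numbers, N ≥ 1 an integer, and x : [a,b] → ℝ twice continuously differentiable. Let B_N x be the Bernstein approximant of x of degree N on [a,b]. Then for every τ ∈ [a,b], |B_N x(τ) − x(τ)| ≤ ((τ−a)(b−τ)/(2N))·sup_{s∈[a,b]}|x''(s)|. -/
open Set

lemma quad_fence {g g' : ℝ → ℝ} {τ c M : ℝ} (hτc : τ ≤ c)
    (hg : ContinuousOn g (Set.Icc τ c))
    (hg' : ∀ u ∈ Set.Ico τ c, HasDerivWithinAt g (g' u) (Set.Ici u) u)
    (h0 : g τ = 0)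
    (hb : ∀ u ∈ Set.Ico τ c, |g' u| ≤ M * (u - τ)) :
    |g c| ≤ M / 2 * (c - τ) ^ 2 := by
  have hB : ∀ u : ℝ, HasDerivAt (fun u => M / 2 * (u - τ) ^ 2) (M * (u - τ)) u := by
    intro u
    have := (((hasDerivAt_id u).sub_const τ).pow 2).const_mul (M / 2)
    refine this.congr_deriv ?_
    simp only [id_eq]; ring
  have := image_norm_le_of_norm_deriv_right_le_deriv_boundary hg hg'
    (by simp [h0]) hB (fun u hu => by simpa [Real.norm_eq_abs] using hb u hu)
  simpa [Real.norm_eq_abs] using this (Set.right_mem_Icc.2 hτc)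

lemma taylor2 {a b M : ℝ} (hab : a < b) {x : ℝ → ℝ} (hx : ContDiffOn ℝ 2 x (Set.Icc a b))
    (hM : ∀ s ∈ Set.Icc a b, |iteratedDerivWithin 2 x (Set.Icc a b) s| ≤ M)
    {τ s : ℝ} (hτ : τ ∈ Set.Icc a b) (hs : s ∈ Set.Icc a b) :
    |x s - x τ - derivWithin x (Set.Icc a b) τ * (s - τ)| ≤ M / 2 * (s - τ) ^ 2 := by
  set d := derivWithin x (Set.Icc a b) with hd
  have hud : UniqueDiffOn ℝ (Set.Icc a b) := uniqueDiffOn_Icc hab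
  have hxd : DifferentiableOn ℝ x (Set.Icc a b) := hx.differentiableOn (by norm_num)
  have hdC : ContDiffOn ℝ 1 d (Set.Icc a b) := hx.derivWithin hud (by norm_num)
  have hdd : DifferentiableOn ℝ d (Set.Icc a b) := hdC.differentiableOn (by norm_num)
  have hiter : ∀ u ∈ Set.Icc a b, derivWithin d (Set.Icc a b) u
      = iteratedDerivWithin 2 x (Set.Icc a b) u := by
    intro u hu
    rw [iteratedDerivWithin_succ]
    exact (derivWithin_congr (fun v hv => (congrFun iteratedDerivWithin_one v))
      (congrFun iteratedDerivWithin_one u)).symm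
  -- Lipschitz bound for d
  have hLip : ∀ u ∈ Set.Icc a b, ∀ v ∈ Set.Icc a b, |d u - d v| ≤ M * |u - v| := by
    intro u hu v hv
    have := (convex_Icc a b).norm_image_sub_le_of_norm_derivWithin_le hdd
      (fun y hy => by rw [Real.norm_eq_abs, hiter y hy]; exact hM y hy) hv hu
    simpa [Real.norm_eq_abs] using this
  -- derivative of g
  have hder : ∀ u ∈ Set.Icc a b,
      HasDerivWithinAt (fun u => x u - x τ - d τ * (u - τ)) (d u - d τ) (Set.Icc a b) u := by
    intro u hu
    have h1 : HasDerivWithinAt x (d u) (Set.Icc a b) u :=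
      (hxd u hu).hasDerivWithinAt
    have h2 : HasDerivWithinAt (fun u => d τ * (u - τ)) (d τ) (Set.Icc a b) u := by
      simpa using ((hasDerivWithinAt_id u (Set.Icc a b)).sub_const τ).const_mul (d τ)
    exact (h1.sub_const (x τ)).sub h2
  set g : ℝ → ℝ := fun u => x u - x τ - d τ * (u - τ) with hg
  have hgcont : ContinuousOn g (Set.Icc a b) :=
    fun u hu => (hder u hu).continuousWithinAt
  have hg0 : g τ = 0 := by simp [hg]
  rcases le_or_gt τ s with hts | hst
  · -- case τ ≤ s
    have key : |g s| ≤ M / 2 * (s - τ) ^ 2 := by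
      refine quad_fence (g' := fun u => d u - d τ) hts (hgcont.mono (Set.Icc_subset_Icc hτ.1 hs.2)) ?_ hg0 ?_
      · intro u hu
        have humem : u ∈ Set.Icc a b := ⟨hτ.1.trans hu.1, hu.2.le.trans hs.2⟩
        refine (hder u humem).mono_of_mem_nhdsWithin ?_
        have hub : u < b := lt_of_lt_of_le hu.2 hs.2
        have : Set.Ici u ∩ Set.Iio b ⊆ Set.Icc a b := by
          intro v hv; exact ⟨humem.1.trans hv.1, hv.2.le⟩
        exact Filter.mem_of_superset
          (inter_mem_nhdsWithin _ (Iio_mem_nhds hub)) this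
      · intro u hu
        have humem : u ∈ Set.Icc a b := ⟨hτ.1.trans hu.1, hu.2.le.trans hs.2⟩
        have := hLip u humem τ hτ
        rwa [abs_of_nonneg (sub_nonneg.2 hu.1)] at this
    simpa [hg] using key
  · -- case s < τ : reflect
    set ψ : ℝ → ℝ := fun v => τ + s - v with hψ
    have key : |(g ∘ ψ) τ| ≤ M / 2 * (τ - s) ^ 2 := by
      refine quad_fence (g' := fun v => (d (ψ v) - d τ) * (-1)) hst.le ?_ ?_ ?_ ?_
      · refine (hgcont.mono (Set.Icc_subset_Icc hs.1 hτ.2)).comp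
          ((continuous_const.sub continuous_id).continuousOn) ?_
        intro v hv
        constructor <;> simp [hψ] <;> [linarith [hv.2]; linarith [hv.1]]
      · intro v hv
        have hψv : ψ v ∈ Set.Icc a b := by
          constructor <;> simp [hψ] <;> [linarith [hτ.1, hv.2, hs.1]; linarith [hτ.2, hv.1]]
        have hψva : a < ψ v := by
          simp only [hψ]; have := hs.1; linarith [hv.2]
        have hgd : HasDerivWithinAt g (d (ψ v) - d τ) (Set.Iic (ψ v)) (ψ v) := by
          refine (hder _ hψv).mono_of_mem_nhdsWithin ?_
          have : Set.Iic (ψ v) ∩ Set.Ioi a ⊆ Set.Icc a b := by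
            intro w hw; exact ⟨hw.2.le, hw.1.trans hψv.2⟩
          exact Filter.mem_of_superset
            (inter_mem_nhdsWithin _ (Ioi_mem_nhds hψva)) this
        have hψd : HasDerivWithinAt ψ (-1) (Set.Ici v) v := by
          simpa using ((hasDerivWithinAt_id v (Set.Ici v)).const_sub (τ + s))
        have hmaps : Set.MapsTo ψ (Set.Ici v) (Set.Iic (ψ v)) := by
          intro w hw; simp only [hψ, Set.mem_Iic]; linarith [Set.mem_Ici.1 hw]
        have := hgd.comp v hψd hmaps
        convert this using 1
      · simp [hg, hψ]
      · intro v hv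
        have hψv : ψ v ∈ Set.Icc a b := by
          constructor <;> simp [hψ] <;> [linarith [hτ.1, hv.2, hs.1]; linarith [hτ.2, hv.1]]
        have := hLip (ψ v) hψv τ hτ
        have h1 : |ψ v - τ| = v - s := by
          show |τ + s - v - τ| = v - s
          rw [show τ + s - v - τ = -(v - s) by ring, abs_neg,
            abs_of_nonneg (by linarith [hv.1])]
        rw [h1] at this
        calc |(d (ψ v) - d τ) * (-1)| = |d (ψ v) - d τ| := by rw [abs_mul]; simp
          _ ≤ M * (v - s) := this
    have : (g ∘ ψ) τ = g s := by simp [hψ]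
    rw [this] at key
    calc |g s| ≤ M / 2 * (τ - s) ^ 2 := key
      _ = M / 2 * (s - τ) ^ 2 := by ring



/-- for `x ∈ C²([a,b])`,
`|B_N x(τ) − x(τ)| ≤ ((τ−a)(b−τ)/(2N)) sup_{s∈[a,b]} |x''(s)|`. -/
theorem bernApprox_pointwise_bound (a b : ℝ) (hab : a < b) (N : ℕ) (hN : 1 ≤ N)
    (x : ℝ → ℝ) (hx : ContDiffOn ℝ 2 x (Set.Icc a b))
    (τ : ℝ) (hτ : τ ∈ Set.Icc a b) :
    |bernApprox x a b N τ - x τ|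
      ≤ (τ - a) * (b - τ) / (2 * (N : ℝ)) *
          sSup ((fun s => |iteratedDerivWithin 2 x (Set.Icc a b) s|) '' Set.Icc a b) := by
  have hud : UniqueDiffOn ℝ (Set.Icc a b) := uniqueDiffOn_Icc hab
  set M := sSup ((fun s => |iteratedDerivWithin 2 x (Set.Icc a b) s|) '' Set.Icc a b) with hM
  have hcont2 : ContinuousOn (fun s => |iteratedDerivWithin 2 x (Set.Icc a b) s|)
      (Set.Icc a b) := (hx.continuousOn_iteratedDerivWithin le_rfl hud).abs
  have hbdd : BddAbove ((fun s => |iteratedDerivWithin 2 x (Set.Icc a b) s|) '' Set.Icc a b) :=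
    (isCompact_Icc.image_of_continuousOn hcont2).bddAbove
  have hub : ∀ s ∈ Set.Icc a b, |iteratedDerivWithin 2 x (Set.Icc a b) s| ≤ M :=
    fun s hs => le_csSup hbdd ⟨s, hs, rfl⟩
  have hM0 : 0 ≤ M := (abs_nonneg _).trans (hub τ hτ)
  have hba : (0:ℝ) < b - a := sub_pos.2 hab
  have hN0 : (0:ℝ) < (N:ℝ) := by exact_mod_cast hN
  set p := (τ - a) / (b - a) with hp
  have hp0 : 0 ≤ p := div_nonneg (sub_nonneg.2 hτ.1) hba.le
  have hq : (1:ℝ) - p = (b - τ) / (b - a) := by rw [hp]; field_simp; ring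
  have hq0 : 0 ≤ 1 - p := by rw [hq]; exact div_nonneg (sub_nonneg.2 hτ.2) hba.le
  have hpa : τ - a = p * (b - a) := by rw [hp]; field_simp
  have hpb : b - τ = (1 - p) * (b - a) := by rw [hq]; field_simp
  -- Bernstein basis at τ equals binomial weight
  have hbern : ∀ j ∈ Finset.range (N+1),
      bern a b N j τ = (N.choose j : ℝ) * p ^ j * (1-p) ^ (N-j) := by
    intro j hj
    have hjN : j ≤ N := Nat.lt_succ_iff.mp (Finset.mem_range.mp hj)
    have h3 : (b-a)^j * (b-a)^(N-j) = (b-a)^N := by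
      rw [← pow_add, Nat.add_sub_cancel' hjN]
    have key : (N.choose j : ℝ) * (τ - a) ^ j * (b - τ) ^ (N - j)
        = ((N.choose j : ℝ) * p ^ j * (1-p) ^ (N-j)) * (b - a) ^ N := by
      rw [hpa, hpb, mul_pow, mul_pow, ← h3]; ring
    rw [bern, key, mul_div_cancel_right₀ _ (pow_ne_zero N hba.ne')]
  -- moment identities
  have hS0 : ∑ j ∈ Finset.range (N+1), ((N.choose j : ℝ) * p ^ j * (1-p) ^ (N-j)) = 1 := by
    have h := add_pow p (1-p) N
    simp at h
    calc ∑ j ∈ Finset.range (N+1), ((N.choose j : ℝ) * p ^ j * (1-p) ^ (N-j))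
        = ∑ j ∈ Finset.range (N+1), p ^ j * (1-p) ^ (N-j) * (N.choose j : ℝ) :=
          Finset.sum_congr rfl (fun j _ => by ring)
      _ = 1 := h.symm
  have hS1 : ∑ j ∈ Finset.range (N+1),
      (j:ℝ) * ((N.choose j : ℝ) * p ^ j * (1-p) ^ (N-j)) = N * p := by
    have h := congrArg (Polynomial.eval p) (bernsteinPolynomial.sum_smul ℝ N)
    simp [Polynomial.eval_finset_sum, bernsteinPolynomial] at h
    exact h
  have hS2 : ∑ j ∈ Finset.range (N+1),
      (j:ℝ) * (((j-1 : ℕ)):ℝ) * ((N.choose j : ℝ) * p ^ j * (1-p) ^ (N-j))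
      = (N:ℝ) * (((N-1:ℕ)):ℝ) * p^2 := by
    have h := congrArg (Polynomial.eval p) (bernsteinPolynomial.sum_mul_smul ℝ N)
    simp [Polynomial.eval_finset_sum, bernsteinPolynomial] at h
    exact h
  have hcast : ∀ j : ℕ, (j:ℝ) * (((j-1:ℕ)):ℝ) = (j:ℝ)^2 - j := by
    intro j
    cases j with
    | zero => simp
    | succ n => push_cast [Nat.succ_sub_one]; ring
  -- variance
  have hV : ∑ j ∈ Finset.range (N+1),
      ((j:ℝ) - N*p)^2 * ((N.choose j : ℝ) * p ^ j * (1-p) ^ (N-j)) = N * p * (1-p) := by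
    have expand : ∀ j ∈ Finset.range (N+1),
        ((j:ℝ) - N*p)^2 * ((N.choose j : ℝ) * p ^ j * (1-p) ^ (N-j))
        = (j:ℝ) * (((j-1:ℕ)):ℝ) * ((N.choose j : ℝ) * p ^ j * (1-p) ^ (N-j))
          + (1 - 2*(N:ℝ)*p) * ((j:ℝ) * ((N.choose j : ℝ) * p ^ j * (1-p) ^ (N-j)))
          + ((N:ℝ)*p)^2 * ((N.choose j : ℝ) * p ^ j * (1-p) ^ (N-j)) := by
      intro j _; rw [hcast j]; ring
    rw [Finset.sum_congr rfl expand, Finset.sum_add_distrib, Finset.sum_add_distrib,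
      ← Finset.mul_sum, ← Finset.mul_sum, hS2, hS1, hS0, hcast N]
    ring
  -- first moment
  have hFM : ∑ j ∈ Finset.range (N+1),
      ((j:ℝ) - N*p) * ((N.choose j : ℝ) * p ^ j * (1-p) ^ (N-j)) = 0 := by
    have expand : ∀ j ∈ Finset.range (N+1),
        ((j:ℝ) - N*p) * ((N.choose j : ℝ) * p ^ j * (1-p) ^ (N-j))
        = (j:ℝ) * ((N.choose j : ℝ) * p ^ j * (1-p) ^ (N-j))
          - ((N:ℝ)*p) * ((N.choose j : ℝ) * p ^ j * (1-p) ^ (N-j)) := by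
      intro j _; ring
    rw [Finset.sum_congr rfl expand, Finset.sum_sub_distrib, ← Finset.mul_sum, hS1, hS0]
    ring
  -- nodes
  have hdt : ∀ j : ℕ, (a + (j:ℝ) * (b - a) / (N:ℝ)) - τ = (b-a)/(N:ℝ) * ((j:ℝ) - N*p) := by
    intro j
    rw [hp]; field_simp; ring
  have ht_mem : ∀ j ∈ Finset.range (N+1), a + (j:ℝ) * (b - a) / (N:ℝ) ∈ Set.Icc a b := by
    intro j hj
    have hjN : (j:ℝ) ≤ N := by exact_mod_cast Nat.lt_succ_iff.mp (Finset.mem_range.mp hj)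
    have hj0 : (0:ℝ) ≤ j := Nat.cast_nonneg j
    constructor
    · have : 0 ≤ (j:ℝ) * (b - a) / (N:ℝ) := by positivity
      linarith
    · rw [← sub_nonneg]
      have : (j:ℝ) * (b - a) / (N:ℝ) ≤ b - a := by
        rw [div_le_iff₀ hN0]; nlinarith
      linarith
  set d := derivWithin x (Set.Icc a b) with hd
  set w : ℕ → ℝ := fun j => (N.choose j : ℝ) * p ^ j * (1-p) ^ (N-j) with hw
  have hw0 : ∀ j, 0 ≤ w j := fun j =>
    mul_nonneg (mul_nonneg (Nat.cast_nonneg _) (pow_nonneg hp0 _)) (pow_nonneg hq0 _)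
  -- main rewrite
  have h1 : bernApprox x a b N τ
      = ∑ j ∈ Finset.range (N+1), x (a + (j:ℝ) * (b - a) / (N:ℝ)) * w j := by
    unfold bernApprox
    refine Finset.sum_congr rfl (fun j hj => ?_); rw [hbern j hj]
  have hrw : bernApprox x a b N τ - x τ
      = ∑ j ∈ Finset.range (N+1),
          (x (a + (j:ℝ) * (b - a) / (N:ℝ)) - x τ
            - d τ * ((a + (j:ℝ) * (b - a) / (N:ℝ)) - τ)) * w j := by
    have expand : ∀ j ∈ Finset.range (N+1),
        (x (a + (j:ℝ) * (b - a) / (N:ℝ)) - x τ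
          - d τ * ((a + (j:ℝ) * (b - a) / (N:ℝ)) - τ)) * w j
        = x (a + (j:ℝ) * (b - a) / (N:ℝ)) * w j - x τ * w j
          - (d τ * ((b-a)/(N:ℝ))) * (((j:ℝ) - N*p) * w j) := by
      intro j _; rw [hdt j]; ring
    rw [Finset.sum_congr rfl expand, Finset.sum_sub_distrib, Finset.sum_sub_distrib,
      ← Finset.mul_sum, ← Finset.mul_sum, hS0, hFM, mul_one, mul_zero, sub_zero, h1]
  -- final estimate
  have hstep : |bernApprox x a b N τ - x τ|
      ≤ ∑ j ∈ Finset.range (N+1),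
          (M/2 * ((a + (j:ℝ) * (b - a) / (N:ℝ)) - τ)^2) * w j := by
    rw [hrw]
    refine (Finset.abs_sum_le_sum_abs _ _).trans (Finset.sum_le_sum ?_)
    intro j hj
    rw [abs_mul, abs_of_nonneg (hw0 j)]
    exact mul_le_mul_of_nonneg_right
      (taylor2 hab hx hub hτ (ht_mem j hj)) (hw0 j)
  have hsum : ∑ j ∈ Finset.range (N+1),
      (M/2 * ((a + (j:ℝ) * (b - a) / (N:ℝ)) - τ)^2) * w j
      = M/2 * (((b-a)/(N:ℝ))^2 * ((N:ℝ) * p * (1-p))) := by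
    have expand : ∀ j ∈ Finset.range (N+1),
        (M/2 * ((a + (j:ℝ) * (b - a) / (N:ℝ)) - τ)^2) * w j
        = (M/2 * ((b-a)/(N:ℝ))^2) * (((j:ℝ) - N*p)^2 * w j) := by
      intro j _; rw [hdt j]; ring
    rw [Finset.sum_congr rfl expand, ← Finset.mul_sum, hV]
    ring
  have hfin : M/2 * (((b-a)/(N:ℝ))^2 * ((N:ℝ) * p * (1-p)))
      = (τ - a) * (b - τ) / (2 * (N:ℝ)) * M := by
    rw [hq, hp]; field_simp
  calc |bernApprox x a b N τ - x τ|
      ≤ ∑ j ∈ Finset.range (N+1),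
          (M/2 * ((a + (j:ℝ) * (b - a) / (N:ℝ)) - τ)^2) * w j := hstep
    _ = M/2 * (((b-a)/(N:ℝ))^2 * ((N:ℝ) * p * (1-p))) := hsum
    _ = (τ - a) * (b - τ) / (2 * (N:ℝ)) * M := hfin
end

section
/- Let a < b be real numbers, N ≥ 1 an integer, and x : [a,b] → ℝ twice continuously differentiable. Let B_N x be the Bernstein approximant of x of degree N on [a,b]. Then for every τ ∈ [a,b], |B_N x(τ) − x(τ)| ≤ ((b−a)²/(8N))·sup_{s∈[a,b]}|x''(s)|. -/
/-- One-sided Taylor-type bound, forward direction. -/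
lemma taylor_step_le {a b M : ℝ} {f f' : ℝ → ℝ} {τ s : ℝ}
    (hτ : τ ∈ Set.Icc a b) (hs : s ∈ Set.Icc a b) (hτs : τ ≤ s)
    (hd : ∀ u ∈ Set.Icc a b, HasDerivWithinAt f (f' u) (Set.Icc a b) u)
    (hlip : ∀ u ∈ Set.Icc a b, |f' u - f' τ| ≤ M * |u - τ|) :
    f s - f τ - f' τ * (s - τ) ≤ M / 2 * (s - τ) ^ 2 := by
  rcases eq_or_lt_of_le hτs with rfl | hlt
  · simp
  have hsub : Set.Icc τ s ⊆ Set.Icc a b := Set.Icc_subset_Icc hτ.1 hs.2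
  set F : ℝ → ℝ := fun u => M / 2 * (u - τ) ^ 2 - (f u - f τ - f' τ * (u - τ)) with hF
  have hmono : MonotoneOn F (Set.Icc τ s) := by
    apply monotoneOn_of_hasDerivWithinAt_nonneg (convex_Icc τ s)
      (f' := fun u => M * (u - τ) - (f' u - f' τ))
    · intro u hu
      have h1 : ContinuousWithinAt f (Set.Icc τ s) u :=
        ((hd u (hsub hu)).continuousWithinAt).mono hsub
      exact (((continuousWithinAt_id.sub continuousWithinAt_const).pow 2).const_mul _).sub
        ((h1.sub continuousWithinAt_const).sub
          (continuousWithinAt_const.mul (continuousWithinAt_id.sub continuousWithinAt_const)))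
    · intro u hu
      rw [interior_Icc] at hu
      have hu' : u ∈ Set.Icc a b := hsub (Set.Ioo_subset_Icc_self hu)
      have h2 : HasDerivWithinAt f (f' u) (interior (Set.Icc τ s)) u := by
        rw [interior_Icc]
        exact (hd u hu').mono (fun y hy => hsub (Set.Ioo_subset_Icc_self hy))
      have h1 : HasDerivWithinAt (fun u : ℝ => M / 2 * (u - τ) ^ 2) (M * (u - τ))
          (interior (Set.Icc τ s)) u := by
        have := (((hasDerivAt_id u).sub_const τ).pow 2).const_mul (M / 2)
        refine this.hasDerivWithinAt.congr_deriv ?_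
        simp [id]
        ring
      have h3 : HasDerivWithinAt (fun u : ℝ => f u - f τ - f' τ * (u - τ))
          (f' u - f' τ) (interior (Set.Icc τ s)) u := by
        have := (h2.sub_const (f τ)).sub
          (((hasDerivAt_id u).sub_const τ).const_mul (f' τ)).hasDerivWithinAt
        refine this.congr_deriv ?_
        ring
      exact h1.sub h3
    · intro u hu
      rw [interior_Icc] at hu
      have hu' : u ∈ Set.Icc a b := hsub (Set.Ioo_subset_Icc_self hu)
      have := hlip u hu'
      rw [abs_of_nonneg (by linarith [hu.1] : (0:ℝ) ≤ u - τ)] at this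
      have h4 : f' u - f' τ ≤ M * (u - τ) := (le_abs_self _).trans this
      linarith
  have := hmono (Set.left_mem_Icc.2 hτs) (Set.right_mem_Icc.2 hτs) hτs
  simp only [hF] at this
  simp only [sub_self, mul_zero, ne_eq, OfNat.ofNat_ne_zero, not_false_eq_true, zero_pow,
    sub_zero] at this
  linarith

/-- One-sided Taylor-type bound, backward direction. -/
lemma taylor_step_ge {a b M : ℝ} {f f' : ℝ → ℝ} {τ s : ℝ}
    (hτ : τ ∈ Set.Icc a b) (hs : s ∈ Set.Icc a b) (hτs : s ≤ τ)
    (hd : ∀ u ∈ Set.Icc a b, HasDerivWithinAt f (f' u) (Set.Icc a b) u)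
    (hlip : ∀ u ∈ Set.Icc a b, |f' u - f' τ| ≤ M * |u - τ|) :
    f s - f τ - f' τ * (s - τ) ≤ M / 2 * (s - τ) ^ 2 := by
  rcases eq_or_lt_of_le hτs with rfl | hlt
  · simp
  have hsub : Set.Icc s τ ⊆ Set.Icc a b := Set.Icc_subset_Icc hs.1 hτ.2
  set F : ℝ → ℝ := fun u => M / 2 * (u - τ) ^ 2 - (f u - f τ - f' τ * (u - τ)) with hF
  have hanti : AntitoneOn F (Set.Icc s τ) := by
    apply antitoneOn_of_hasDerivWithinAt_nonpos (convex_Icc s τ)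
      (f' := fun u => M * (u - τ) - (f' u - f' τ))
    · intro u hu
      have h1 : ContinuousWithinAt f (Set.Icc s τ) u :=
        ((hd u (hsub hu)).continuousWithinAt).mono hsub
      exact (((continuousWithinAt_id.sub continuousWithinAt_const).pow 2).const_mul _).sub
        ((h1.sub continuousWithinAt_const).sub
          (continuousWithinAt_const.mul (continuousWithinAt_id.sub continuousWithinAt_const)))
    · intro u hu
      rw [interior_Icc] at hu
      have hu' : u ∈ Set.Icc a b := hsub (Set.Ioo_subset_Icc_self hu)
      have h2 : HasDerivWithinAt f (f' u) (interior (Set.Icc s τ)) u := by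
        rw [interior_Icc]
        exact (hd u hu').mono (fun y hy => hsub (Set.Ioo_subset_Icc_self hy))
      have h1 : HasDerivWithinAt (fun u : ℝ => M / 2 * (u - τ) ^ 2) (M * (u - τ))
          (interior (Set.Icc s τ)) u := by
        have := (((hasDerivAt_id u).sub_const τ).pow 2).const_mul (M / 2)
        refine this.hasDerivWithinAt.congr_deriv ?_
        simp [id]
        ring
      have h3 : HasDerivWithinAt (fun u : ℝ => f u - f τ - f' τ * (u - τ))
          (f' u - f' τ) (interior (Set.Icc s τ)) u := by
        have := (h2.sub_const (f τ)).sub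
          (((hasDerivAt_id u).sub_const τ).const_mul (f' τ)).hasDerivWithinAt
        refine this.congr_deriv ?_
        ring
      exact h1.sub h3
    · intro u hu
      rw [interior_Icc] at hu
      have hu' : u ∈ Set.Icc a b := hsub (Set.Ioo_subset_Icc_self hu)
      have := hlip u hu'
      rw [abs_of_nonpos (by linarith [hu.2] : u - τ ≤ 0)] at this
      have h4 : -(f' u - f' τ) ≤ M * -(u - τ) := (neg_le_abs _).trans this
      linarith
  have := hanti (Set.left_mem_Icc.2 hτs) (Set.right_mem_Icc.2 hτs) hτs
  simp only [hF] at this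
  simp only [sub_self, mul_zero, ne_eq, OfNat.ofNat_ne_zero, not_false_eq_true, zero_pow,
    sub_zero] at this
  linarith

/-- for `x ∈ C²([a,b])`,
`|B_N x(τ) − x(τ)| ≤ ((b−a)²/(8N)) sup_{s∈[a,b]} |x''(s)|`. -/
theorem bernApprox_uniform_bound (a b : ℝ) (hab : a < b) (N : ℕ) (hN : 1 ≤ N)
    (x : ℝ → ℝ) (hx : ContDiffOn ℝ 2 x (Set.Icc a b))
    (τ : ℝ) (hτ : τ ∈ Set.Icc a b) :
    |bernApprox x a b N τ - x τ|
      ≤ (b - a) ^ 2 / (8 * (N : ℝ)) *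
          sSup ((fun s => |iteratedDerivWithin 2 x (Set.Icc a b) s|) '' Set.Icc a b) := by
  have hba : (0:ℝ) < b - a := sub_pos.2 hab
  have hN0 : (0:ℝ) < (N:ℝ) := by exact_mod_cast Nat.lt_of_lt_of_le Nat.zero_lt_one hN
  have hUD : UniqueDiffOn ℝ (Set.Icc a b) := uniqueDiffOn_Icc hab
  set M := sSup ((fun s => |iteratedDerivWithin 2 x (Set.Icc a b) s|) '' Set.Icc a b) with hMdef
  -- M bounds |x''|
  have hcont2 : ContinuousOn (iteratedDerivWithin 2 x (Set.Icc a b)) (Set.Icc a b) :=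
    hx.continuousOn_iteratedDerivWithin le_rfl hUD
  have hbdd : BddAbove ((fun s => |iteratedDerivWithin 2 x (Set.Icc a b) s|) '' Set.Icc a b) :=
    (isCompact_Icc.image_of_continuousOn hcont2.abs).bddAbove
  have hM : ∀ y ∈ Set.Icc a b, |iteratedDerivWithin 2 x (Set.Icc a b) y| ≤ M :=
    fun y hy => le_csSup hbdd ⟨y, hy, rfl⟩
  have hM0 : 0 ≤ M := (abs_nonneg _).trans (hM τ hτ)
  -- derivative setup
  set f' := derivWithin x (Set.Icc a b) with hf'def
  have hxdiff : DifferentiableOn ℝ x (Set.Icc a b) := hx.differentiableOn (by norm_num)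
  have hd : ∀ w ∈ Set.Icc a b, HasDerivWithinAt x (f' w) (Set.Icc a b) w :=
    fun w hw => (hxdiff w hw).hasDerivWithinAt
  have hf'C : ContDiffOn ℝ 1 f' (Set.Icc a b) := hx.derivWithin hUD (by norm_num)
  have hf'diff : DifferentiableOn ℝ f' (Set.Icc a b) := hf'C.differentiableOn (by norm_num)
  have hderiv2 : ∀ y ∈ Set.Icc a b, derivWithin f' (Set.Icc a b) y
      = iteratedDerivWithin 2 x (Set.Icc a b) y := by
    intro y hy
    rw [show (2:ℕ) = 1 + 1 from rfl, iteratedDerivWithin_succ]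
    exact (derivWithin_congr (fun z hz => congrFun iteratedDerivWithin_one z)
      (congrFun iteratedDerivWithin_one y)).symm
  have hlip : ∀ w ∈ Set.Icc a b, |f' w - f' τ| ≤ M * |w - τ| := by
    intro w hw
    have := Convex.norm_image_sub_le_of_norm_derivWithin_le hf'diff
      (fun y hy => by rw [Real.norm_eq_abs, hderiv2 y hy]; exact hM y hy)
      (convex_Icc a b) hτ hw
    simpa [Real.norm_eq_abs] using this
  -- Taylor-type key bound
  have key : ∀ s ∈ Set.Icc a b, |x s - x τ - f' τ * (s - τ)| ≤ M / 2 * (s - τ) ^ 2 := by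
    intro s hs
    have hdneg : ∀ w ∈ Set.Icc a b, HasDerivWithinAt (fun z => -x z) (-f' w) (Set.Icc a b) w :=
      fun w hw => (hd w hw).neg
    have hlipneg : ∀ w ∈ Set.Icc a b, |(-f' w) - (-f' τ)| ≤ M * |w - τ| := by
      intro w hw
      have := hlip w hw
      rw [show (-f' w) - (-f' τ) = -(f' w - f' τ) by ring, abs_neg]
      exact this
    rw [abs_le]
    rcases le_total τ s with h | h
    · constructor
      · have := taylor_step_le (f := fun z => -x z) (f' := fun w => -f' w)
          hτ hs h hdneg hlipneg
        linarith
      · exact taylor_step_le hτ hs h hd hlip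
    · constructor
      · have := taylor_step_ge (f := fun z => -x z) (f' := fun w => -f' w)
          hτ hs h hdneg hlipneg
        linarith
      · exact taylor_step_ge hτ hs h hd hlip
  -- Bernstein polynomial identities
  set u : ℝ := (τ - a) / (b - a) with hu
  have hu0 : 0 ≤ u := div_nonneg (by linarith [hτ.1]) hba.le
  have hu1 : u ≤ 1 := (div_le_one hba).2 (by linarith [hτ.2])
  have hbe : ∀ j ∈ Finset.range (N + 1),
      bern a b N j τ = (bernsteinPolynomial ℝ N j).eval u := by
    intro j hj
    have hjN : j ≤ N := Nat.lt_succ_iff.1 (Finset.mem_range.1 hj)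
    have hpow : (b - a) ^ N = (b - a) ^ j * (b - a) ^ (N - j) := by
      rw [← pow_add, Nat.add_sub_cancel' hjN]
    have h1u : 1 - u = (b - τ) / (b - a) := by rw [hu]; field_simp; ring
    rw [bernsteinPolynomial, bern]
    simp only [Polynomial.eval_mul, Polynomial.eval_pow, Polynomial.eval_sub, Polynomial.eval_one,
      Polynomial.eval_X, Polynomial.eval_natCast, smul_eq_mul]
    rw [h1u, hu, div_pow, div_pow, hpow]
    field_simp
  have E0 : ∑ j ∈ Finset.range (N + 1), bern a b N j τ = 1 := by
    rw [Finset.sum_congr rfl hbe, ← Polynomial.eval_finset_sum, bernsteinPolynomial.sum,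
      Polynomial.eval_one]
  have E1 : ∑ j ∈ Finset.range (N + 1), (j : ℝ) * bern a b N j τ = N * u := by
    have := congrArg (Polynomial.eval u) (bernsteinPolynomial.sum_smul ℝ N)
    rw [Polynomial.eval_finset_sum] at this
    simp only [nsmul_eq_mul, Polynomial.eval_mul, Polynomial.eval_natCast,
      Polynomial.eval_X] at this
    rw [Finset.sum_congr rfl (fun j hj => by rw [hbe j hj])]
    exact this
  have E2 : ∑ j ∈ Finset.range (N + 1), ((N : ℝ) * u - (j : ℝ)) ^ 2 * bern a b N j τ
      = N * u * (1 - u) := by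
    have := congrArg (Polynomial.eval u) (bernsteinPolynomial.variance ℝ N)
    rw [Polynomial.eval_finset_sum] at this
    simp only [nsmul_eq_mul, Polynomial.eval_mul, Polynomial.eval_pow, Polynomial.eval_sub,
      Polynomial.eval_natCast, Polynomial.eval_X, Polynomial.eval_one] at this
    rw [Finset.sum_congr rfl (fun j hj => by rw [hbe j hj])]
    exact this
  -- nodes
  have ht : ∀ j ∈ Finset.range (N + 1), a + (j : ℝ) * (b - a) / (N : ℝ) ∈ Set.Icc a b := by
    intro j hj
    have hjN : (j : ℝ) ≤ (N : ℝ) := Nat.cast_le.2 (Nat.lt_succ_iff.1 (Finset.mem_range.1 hj))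
    have hj0 : (0:ℝ) ≤ (j : ℝ) := Nat.cast_nonneg j
    constructor
    · have : 0 ≤ (j : ℝ) * (b - a) / (N : ℝ) :=
        div_nonneg (mul_nonneg hj0 hba.le) hN0.le
      linarith
    · rw [← sub_nonneg]
      have h1 : (j : ℝ) * (b - a) ≤ (N : ℝ) * (b - a) :=
        mul_le_mul_of_nonneg_right hjN hba.le
      have h2 : (j : ℝ) * (b - a) / (N : ℝ) ≤ b - a := by
        rw [div_le_iff₀ hN0]; linarith
      linarith
  -- first and second moment sums
  have Sum1 : ∑ j ∈ Finset.range (N + 1),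
      ((a + (j : ℝ) * (b - a) / (N : ℝ)) - τ) * bern a b N j τ = 0 := by
    have step : ∀ j ∈ Finset.range (N + 1),
        ((a + (j : ℝ) * (b - a) / (N : ℝ)) - τ) * bern a b N j τ
          = (b - a) / (N : ℝ) * ((j : ℝ) * bern a b N j τ) - (τ - a) * bern a b N j τ := by
      intro j _
      field_simp
      ring
    rw [Finset.sum_congr rfl step, Finset.sum_sub_distrib, ← Finset.mul_sum, ← Finset.mul_sum,
      E1, E0, hu]
    field_simp
    ring
  have Sum2 : ∑ j ∈ Finset.range (N + 1),
      ((a + (j : ℝ) * (b - a) / (N : ℝ)) - τ) ^ 2 * bern a b N j τ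
        = (b - a) ^ 2 * (u * (1 - u)) / (N : ℝ) := by
    have step : ∀ j ∈ Finset.range (N + 1),
        ((a + (j : ℝ) * (b - a) / (N : ℝ)) - τ) ^ 2 * bern a b N j τ
          = ((b - a) / (N : ℝ)) ^ 2 * (((N : ℝ) * u - (j : ℝ)) ^ 2 * bern a b N j τ) := by
      intro j _
      have : (a + (j : ℝ) * (b - a) / (N : ℝ)) - τ
          = -((b - a) / (N : ℝ)) * ((N : ℝ) * u - (j : ℝ)) := by
        rw [hu]; field_simp; ring
      rw [this]
      ring
    rw [Finset.sum_congr rfl step, ← Finset.mul_sum, E2]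
    field_simp
  -- expansion
  have expand : bernApprox x a b N τ - x τ = ∑ j ∈ Finset.range (N + 1),
      (x (a + (j : ℝ) * (b - a) / (N : ℝ)) - x τ
        - f' τ * ((a + (j : ℝ) * (b - a) / (N : ℝ)) - τ)) * bern a b N j τ := by
    rw [bernApprox]
    have h1 : ∑ j ∈ Finset.range (N + 1),
        (x (a + (j : ℝ) * (b - a) / (N : ℝ)) - x τ
          - f' τ * ((a + (j : ℝ) * (b - a) / (N : ℝ)) - τ)) * bern a b N j τ
        = (∑ j ∈ Finset.range (N + 1), x (a + (j : ℝ) * (b - a) / (N : ℝ)) * bern a b N j τ)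
          - x τ * ∑ j ∈ Finset.range (N + 1), bern a b N j τ
          - f' τ * ∑ j ∈ Finset.range (N + 1),
              ((a + (j : ℝ) * (b - a) / (N : ℝ)) - τ) * bern a b N j τ := by
      rw [Finset.mul_sum, Finset.mul_sum, ← Finset.sum_sub_distrib, ← Finset.sum_sub_distrib]
      exact Finset.sum_congr rfl fun j _ => by ring
    rw [h1, E0, Sum1]
    ring
  -- nonnegativity of bern
  have hbnn : ∀ j ∈ Finset.range (N + 1), 0 ≤ bern a b N j τ := by
    intro j _
    apply div_nonneg
    · exact mul_nonneg (mul_nonneg (Nat.cast_nonneg _) (pow_nonneg (by linarith [hτ.1]) _))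
        (pow_nonneg (by linarith [hτ.2]) _)
    · positivity
  -- final estimate
  have huu : u * (1 - u) ≤ 1 / 4 := by nlinarith [sq_nonneg (u - 1 / 2)]
  calc |bernApprox x a b N τ - x τ|
      = |∑ j ∈ Finset.range (N + 1),
          (x (a + (j : ℝ) * (b - a) / (N : ℝ)) - x τ
            - f' τ * ((a + (j : ℝ) * (b - a) / (N : ℝ)) - τ)) * bern a b N j τ| := by
        rw [expand]
    _ ≤ ∑ j ∈ Finset.range (N + 1),
          |(x (a + (j : ℝ) * (b - a) / (N : ℝ)) - x τ
            - f' τ * ((a + (j : ℝ) * (b - a) / (N : ℝ)) - τ)) * bern a b N j τ| :=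
        Finset.abs_sum_le_sum_abs _ _
    _ ≤ ∑ j ∈ Finset.range (N + 1),
          (M / 2 * ((a + (j : ℝ) * (b - a) / (N : ℝ)) - τ) ^ 2) * bern a b N j τ := by
        apply Finset.sum_le_sum
        intro j hj
        rw [abs_mul, abs_of_nonneg (hbnn j hj)]
        exact mul_le_mul_of_nonneg_right (key _ (ht j hj)) (hbnn j hj)
    _ = M / 2 * ∑ j ∈ Finset.range (N + 1),
          ((a + (j : ℝ) * (b - a) / (N : ℝ)) - τ) ^ 2 * bern a b N j τ := by
        rw [Finset.mul_sum]
        exact Finset.sum_congr rfl fun j _ => by ring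
    _ = M / 2 * ((b - a) ^ 2 * (u * (1 - u)) / (N : ℝ)) := by rw [Sum2]
    _ ≤ (b - a) ^ 2 / (8 * (N : ℝ)) * M := by
        have h8 : M / 2 * ((b - a) ^ 2 * (u * (1 - u))) ≤ (b - a) ^ 2 / 8 * M := by
          nlinarith [mul_nonneg hM0 (sq_nonneg (b - a)), sq_nonneg (b - a)]
        calc M / 2 * ((b - a) ^ 2 * (u * (1 - u)) / (N : ℝ))
            = (M / 2 * ((b - a) ^ 2 * (u * (1 - u)))) / (N : ℝ) := by ring
          _ ≤ ((b - a) ^ 2 / 8 * M) / (N : ℝ) := by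
              gcongr
          _ = (b - a) ^ 2 / (8 * (N : ℝ)) * M := by ring
end

section
/- Let a < b be real numbers, N ≥ 1 an integer, h = (b−a)/N, and x : [a,b] → ℝ a function. Let B_N x be the Bernstein approximant of x of degree N on [a,b]. Then for every τ ∈ [a,b] with τ ≠ a + jh for all j = 0,...,N, the generalized Stancu remainder formula holds: B_N x(τ) − x(τ) = ((τ−a)(b−τ)/N)·Σ_{j=0}^{N−1} [a+jh, a+(j+1)h, τ; x]·b_{j,N−1}(τ), where [s, t, τ; x] denotes the second-order divided difference ( (x(τ)−x(t))/(τ−t) − (x(t)−x(s))/(t−s) ) / (τ−s). -/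
set_option maxHeartbeats 1000000


/-- Second-order divided difference of `x` at the points `s, t, u`:
`[s,t,u;x] = ((x(u)−x(t))/(u−t) − (x(t)−x(s))/(t−s)) / (u−s)`. -/
noncomputable def divDiff2 (x : ℝ → ℝ) (s t u : ℝ) : ℝ :=
  ((x u - x t) / (u - t) - (x t - x s) / (t - s)) / (u - s)

private lemma stancu_term (x : ℝ → ℝ) (τ s u B K1 K2 h2 : ℝ)
    (hs : τ - s ≠ 0) (hu : τ - u ≠ 0) (hsu : u - s = h2) (hh2 : h2 ≠ 0)
    (hK : K1 = K2 * h2) :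
    K1 * (divDiff2 x s u τ * B)
      = (x s - x τ) * (K2 * B / (τ - s)) - (x u - x τ) * (K2 * B / (τ - u)) := by
  subst hsu hK
  have hus : u - s ≠ 0 := hh2
  rw [divDiff2]
  field_simp
  ring

private lemma stancu_coef_first (a b τ : ℝ) (M : ℕ) (hba : b - a ≠ 0) (hτa : τ - a ≠ 0) :
    (τ - a) * (b - τ) / (b - a) * bern a b M 0 τ / (τ - a)
      = bern a b (M + 1) 0 τ := by
  simp only [bern, Nat.choose_zero_right, Nat.cast_one, pow_zero, Nat.sub_zero, pow_succ]
  field_simp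

private lemma stancu_coef_last (a b τ : ℝ) (M : ℕ) (hba : b - a ≠ 0) (hτb : τ - b ≠ 0) :
    -((τ - a) * (b - τ) / (b - a) * bern a b M M τ / (τ - b))
      = bern a b (M + 1) (M + 1) τ := by
  simp only [bern, Nat.choose_self, Nat.cast_one, Nat.sub_self, pow_zero, pow_succ]
  field_simp
  ring

private lemma stancu_coef_mid (a b τ : ℝ) (M j k : ℕ) (hM : M = j + k + 1)
    (hba : b - a ≠ 0) (hMR : ((M : ℝ) + 1) ≠ 0)
    (h2 : τ - (a + ((j : ℝ) + 1) * ((b - a) / ((M : ℝ) + 1))) ≠ 0) :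
    (τ - a) * (b - τ) / (b - a) * bern a b M (j + 1) τ
        / (τ - (a + ((j : ℝ) + 1) * ((b - a) / ((M : ℝ) + 1))))
      - (τ - a) * (b - τ) / (b - a) * bern a b M j τ
        / (τ - (a + ((j : ℝ) + 1) * ((b - a) / ((M : ℝ) + 1))))
      = bern a b (M + 1) (j + 1) τ := by
  subst hM
  have hc1 : (((j + k + 1 + 1).choose (j + 1) : ℕ) : ℝ)
      = ((j + k + 1).choose j : ℝ) + ((j + k + 1).choose (j + 1) : ℝ) := by
    exact_mod_cast congrArg Nat.cast (Nat.choose_succ_succ (j + k + 1) j)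
  have hc2 : ((j : ℝ) + 1) * (((j + k + 1 + 1).choose (j + 1) : ℕ) : ℝ)
      = ((j : ℝ) + (k : ℝ) + 2) * ((j + k + 1).choose j : ℝ) := by
    have h := congrArg (Nat.cast (R := ℝ)) (Nat.add_one_mul_choose_eq (j + k + 1) j)
    push_cast at h
    linarith
  have hDlin : τ * ((j : ℝ) + (k : ℝ) + 1 + 1)
      - (a * ((j : ℝ) + (k : ℝ) + 1 + 1) + ((j : ℝ) + 1) * (b - a)) ≠ 0 := by
    push_cast at h2 hMR
    intro hcontra
    apply h2
    field_simp
    linarith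
  simp only [bern, show j + k + 1 - (j + 1) = k by omega,
    show j + k + 1 - j = k + 1 by omega, show j + k + 1 + 1 - (j + 1) = k + 1 by omega,
    pow_succ]
  push_cast at hMR h2 ⊢
  generalize (τ - a) ^ j = P at *
  generalize (b - τ) ^ k = Q at *
  have hS : (b - a) ^ (j + k) ≠ 0 := pow_ne_zero _ hba
  generalize hSS : (b - a) ^ (j + k) = S at *
  field_simp
  rw [div_eq_iff (fun h => hDlin (by linarith))]
  linear_combination
    (-((τ - a) * (b - τ) * P * Q) * ((j : ℝ) + (k : ℝ) + 2) * (τ - a)) * hc1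
      + ((τ - a) * (b - τ) * P * Q * (b - a)) * hc2


/-- the generalized Stancu remainder formula: for `τ ∈ [a,b]` not a node,
`B_N x(τ) − x(τ) = ((τ−a)(b−τ)/N) Σ_{j=0}^{N−1} [a+jh, a+(j+1)h, τ; x] b_{j,N−1}(τ)`
with `h = (b−a)/N`. -/
theorem stancu_remainder (a b : ℝ) (hab : a < b) (N : ℕ) (hN : 1 ≤ N) (x : ℝ → ℝ)
    (τ : ℝ) (hτ : τ ∈ Set.Icc a b)
    (hnode : ∀ j : ℕ, j ≤ N → τ ≠ a + (j : ℝ) * ((b - a) / (N : ℝ))) :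
    bernApprox x a b N τ - x τ
      = (τ - a) * (b - τ) / (N : ℝ) *
          ∑ j ∈ Finset.range N,
            divDiff2 x (a + (j : ℝ) * ((b - a) / (N : ℝ)))
              (a + ((j : ℝ) + 1) * ((b - a) / (N : ℝ))) τ * bern a b (N - 1) j τ := by
  obtain ⟨M, rfl⟩ : ∃ M, N = M + 1 := ⟨N - 1, by omega⟩
  have hba : b - a ≠ 0 := sub_ne_zero.mpr hab.ne'
  have hMR : ((M : ℝ) + 1) ≠ 0 := by positivity
  set t : ℕ → ℝ := fun j => a + (j : ℝ) * ((b - a) / ((M : ℝ) + 1)) with ht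
  have hnode' : ∀ j : ℕ, j ≤ M + 1 → τ - t j ≠ 0 := by
    intro j hj
    refine sub_ne_zero.mpr ?_
    have := hnode j hj
    push_cast at this ⊢
    simpa [t] using this
  have hτa : τ - a ≠ 0 := by
    have := hnode' 0 (by omega)
    simpa [t] using this
  have htb : t (M + 1) = b := by
    show a + ((M + 1 : ℕ) : ℝ) * ((b - a) / ((M : ℝ) + 1)) = b
    push_cast
    field_simp
    ring
  have hτb : τ - b ≠ 0 := by
    have := hnode' (M + 1) le_rfl
    rwa [htb] at this
  -- partition of unity
  have hpart : ∑ j ∈ Finset.range (M + 2), bern a b (M + 1) j τ = 1 := by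
    simp only [bern]
    rw [← Finset.sum_div, div_eq_one_iff_eq (pow_ne_zero _ hba)]
    rw [show b - a = (τ - a) + (b - τ) by ring, add_pow]
    refine Finset.sum_congr rfl fun j _ => by ring
  -- rewrite the LHS
  have hL : bernApprox x a b (M + 1) τ - x τ
      = ∑ j ∈ Finset.range (M + 2), (x (t j) - x τ) * bern a b (M + 1) j τ := by
    simp only [sub_mul, Finset.sum_sub_distrib, ← Finset.mul_sum, hpart, mul_one]
    congr 1
    refine Finset.sum_congr rfl fun j _ => ?_
    congr 2
    push_cast [t]
    ring
  -- rewrite the RHS sum, term by term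
  have hR : (τ - a) * (b - τ) / ((M + 1 : ℕ) : ℝ) *
        ∑ j ∈ Finset.range (M + 1),
          divDiff2 x (a + (j : ℝ) * ((b - a) / ((M + 1 : ℕ) : ℝ)))
            (a + ((j : ℝ) + 1) * ((b - a) / ((M + 1 : ℕ) : ℝ))) τ * bern a b (M + 1 - 1) j τ
      = ∑ j ∈ Finset.range (M + 1),
          ((x (t j) - x τ) * ((τ - a) * (b - τ) / (b - a) * bern a b M j τ / (τ - t j))
            - (x (t (j + 1)) - x τ) *
                ((τ - a) * (b - τ) / (b - a) * bern a b M j τ / (τ - t (j + 1)))) := by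
    rw [Finset.mul_sum]
    refine Finset.sum_congr rfl fun j hj => ?_
    have hj' : j < M + 1 := Finset.mem_range.mp hj
    have e1 : a + (j : ℝ) * ((b - a) / ((M + 1 : ℕ) : ℝ)) = t j := by
      push_cast [t]; ring
    have e2 : a + ((j : ℝ) + 1) * ((b - a) / ((M + 1 : ℕ) : ℝ)) = t (j + 1) := by
      push_cast [t]; ring
    rw [e1, e2, show M + 1 - 1 = M from rfl]
    have hsu : t (j + 1) - t j = (b - a) / ((M : ℝ) + 1) := by
      push_cast [t]; ring
    have hh2 : (b - a) / ((M : ℝ) + 1) ≠ 0 := div_ne_zero hba hMR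
    have hK : (τ - a) * (b - τ) / ((M + 1 : ℕ) : ℝ)
        = (τ - a) * (b - τ) / (b - a) * ((b - a) / ((M : ℝ) + 1)) := by
      push_cast
      field_simp
    exact stancu_term x τ (t j) (t (j + 1)) (bern a b M j τ) _ _ _
      (hnode' j (by omega)) (hnode' (j + 1) (by omega)) hsu hh2 hK
  -- match coefficients
  have hmid : ∀ j, j < M →
      (τ - a) * (b - τ) / (b - a) * bern a b M (j + 1) τ / (τ - t (j + 1))
        - (τ - a) * (b - τ) / (b - a) * bern a b M j τ / (τ - t (j + 1))
        = bern a b (M + 1) (j + 1) τ := by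
    intro j hjM
    have e2 : t (j + 1) = a + ((j : ℝ) + 1) * ((b - a) / ((M : ℝ) + 1)) := by
      push_cast [t]; ring
    rw [e2]
    exact stancu_coef_mid a b τ M j (M - j - 1) (by omega) hba hMR
      (e2 ▸ hnode' (j + 1) (by omega))
  have hfirst : (τ - a) * (b - τ) / (b - a) * bern a b M 0 τ / (τ - t 0)
      = bern a b (M + 1) 0 τ := by
    rw [show t 0 = a by simp [t]]
    exact stancu_coef_first a b τ M hba hτa
  have hlast : -((τ - a) * (b - τ) / (b - a) * bern a b M M τ / (τ - t (M + 1)))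
      = bern a b (M + 1) (M + 1) τ := by
    rw [htb]
    exact stancu_coef_last a b τ M hba hτb
  -- assemble
  rw [hL, hR]
  rw [Finset.sum_sub_distrib]
  rw [Finset.sum_range_succ' (fun j => (x (t j) - x τ) *
      ((τ - a) * (b - τ) / (b - a) * bern a b M j τ / (τ - t j))) M]
  rw [Finset.sum_range_succ (fun j => (x (t (j + 1)) - x τ) *
      ((τ - a) * (b - τ) / (b - a) * bern a b M j τ / (τ - t (j + 1)))) M]
  rw [show M + 2 = (M + 1) + 1 from rfl,
    Finset.sum_range_succ (fun j => (x (t j) - x τ) * bern a b (M + 1) j τ) (M + 1)]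
  rw [Finset.sum_range_succ' (fun j => (x (t j) - x τ) * bern a b (M + 1) j τ) M]
  have hsum1 : ∑ j ∈ Finset.range M, (x (t (j + 1)) - x τ) *
        ((τ - a) * (b - τ) / (b - a) * bern a b M (j + 1) τ / (τ - t (j + 1)))
      - ∑ j ∈ Finset.range M, (x (t (j + 1)) - x τ) *
        ((τ - a) * (b - τ) / (b - a) * bern a b M j τ / (τ - t (j + 1)))
      = ∑ j ∈ Finset.range M, (x (t (j + 1)) - x τ) * bern a b (M + 1) (j + 1) τ := by
    rw [← Finset.sum_sub_distrib]
    refine Finset.sum_congr rfl fun j hj => ?_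
    rw [← mul_sub, hmid j (Finset.mem_range.mp hj)]
  rw [htb]
  rw [htb] at hlast
  linear_combination -hsum1 - (x (t 0) - x τ) * hfirst - (x b - x τ) * hlast
end

section
/- Let x : [0,t_f] → ℝ be twice continuously differentiable, let K, N ≥ 1, and let 0 = t_0 < t_1 < ... < t_K = t_f be knots satisfying t_k − t_{k−1} ≤ C_t/K for all k, where C_t > 0. Then the composite Bernstein quadrature satisfies | Σ_{k=1}^K ((t_k − t_{k−1})/(N+1))·Σ_{j=0}^N x(t_{k,j}) − ∫₀^{t_f} x(t) dt | ≤ (C_t³/(8K²N))·sup_{τ∈[0,t_f]}|x''(τ)|, where t_{k,j} = t_{k−1} + (j/N)(t_k − t_{k−1}). -/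
open Set intervalIntegral MeasureTheory Finset

open intervalIntegral in
lemma beta_nat (b a : ℕ) :
    ∫ t in (0:ℝ)..1, t ^ a * (1 - t) ^ b
      = (a.factorial * b.factorial : ℝ) / (a + b + 1).factorial := by
  induction b generalizing a with
  | zero =>
    simp only [pow_zero, mul_one, integral_pow, Nat.factorial]
    push_cast [Nat.factorial_succ]
    field_simp
    simp
  | succ b ih =>
    have key : ∫ t in (0:ℝ)..1,
        (t ^ a * (1 - t) ^ (b+1) - ((b:ℝ)+1)/((a:ℝ)+1) * (t ^ (a+1) * (1 - t) ^ b)) = 0 := by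
      have hF : ∀ t : ℝ, HasDerivAt (fun t : ℝ => t ^ (a+1) * (1 - t) ^ (b+1) / ((a:ℝ)+1))
          (t ^ a * (1 - t) ^ (b+1) - ((b:ℝ)+1)/((a:ℝ)+1) * (t ^ (a+1) * (1 - t) ^ b)) t := by
        intro t
        have h1 : HasDerivAt (fun t : ℝ => t ^ (a+1)) (((a:ℝ)+1) * t ^ a) t := by
          simpa using (hasDerivAt_pow (a+1) t)
        have h2 : HasDerivAt (fun t : ℝ => (1 - t) ^ (b+1)) (-(((b:ℝ)+1) * (1-t) ^ b)) t := by
          have := ((hasDerivAt_pow (b+1) (1 - t)).comp t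
            ((hasDerivAt_id t).const_sub 1))
          simp at this; exact this
        have := (h1.mul h2).div_const ((a:ℝ)+1)
        refine this.congr_deriv ?_
        have ha : ((a:ℝ)+1) ≠ 0 := by positivity
        field_simp
        ring
      have hint : IntervalIntegrable (fun t : ℝ =>
          t ^ a * (1 - t) ^ (b+1) - ((b:ℝ)+1)/((a:ℝ)+1) * (t ^ (a+1) * (1 - t) ^ b))
          MeasureTheory.volume 0 1 := by
        apply Continuous.intervalIntegrable; continuity
      have := intervalIntegral.integral_eq_sub_of_hasDerivAt
        (a := (0:ℝ)) (b := (1:ℝ)) (fun t _ => hF t) hint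
      simpa using this
    have hi1 : IntervalIntegrable (fun t : ℝ => t ^ a * (1 - t) ^ (b+1)) MeasureTheory.volume 0 1 := by
      apply Continuous.intervalIntegrable; continuity
    have hi2 : IntervalIntegrable (fun t : ℝ => ((b:ℝ)+1)/((a:ℝ)+1) * (t ^ (a+1) * (1 - t) ^ b)) MeasureTheory.volume 0 1 := by
      apply Continuous.intervalIntegrable; continuity
    rw [intervalIntegral.integral_sub hi1 hi2, sub_eq_zero] at key
    rw [key, intervalIntegral.integral_const_mul, ih (a+1)]
    have ha : ((a:ℝ)+1) ≠ 0 := by positivity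
    have h3 : ((a + 1 + b + 1).factorial : ℝ) = ((a + (b+1) + 1).factorial : ℝ) := by
      norm_num; ring_nf
    push_cast [Nat.factorial_succ]
    field_simp
    ring_nf

noncomputable def bb (N j : ℕ) (τ : ℝ) : ℝ := (N.choose j : ℝ) * τ ^ j * (1 - τ) ^ (N - j)

lemma bb_eval (N j : ℕ) (τ : ℝ) : (bernsteinPolynomial ℝ N j).eval τ = bb N j τ := by
  simp [bernsteinPolynomial, bb]

lemma bb_nonneg (N j : ℕ) {τ : ℝ} (h0 : 0 ≤ τ) (h1 : τ ≤ 1) : 0 ≤ bb N j τ := by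
  have h2 : 0 ≤ 1 - τ := by linarith
  unfold bb
  positivity

lemma bb_sum (N : ℕ) (τ : ℝ) : ∑ j ∈ Finset.range (N+1), bb N j τ = 1 := by
  have := congrArg (Polynomial.eval τ) (bernsteinPolynomial.sum ℝ N)
  simpa [Polynomial.eval_finset_sum, bb_eval] using this

lemma bb_sum_smul (N : ℕ) (τ : ℝ) :
    ∑ j ∈ Finset.range (N+1), (j : ℝ) * bb N j τ = N * τ := by
  have := congrArg (Polynomial.eval τ) (bernsteinPolynomial.sum_smul ℝ N)
  simpa [Polynomial.eval_finset_sum, bb_eval] using this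

lemma bb_variance (N : ℕ) (τ : ℝ) :
    ∑ j ∈ Finset.range (N+1), ((N:ℝ) * τ - (j:ℝ))^2 * bb N j τ = N * τ * (1 - τ) := by
  have := congrArg (Polynomial.eval τ) (bernsteinPolynomial.variance ℝ N)
  simpa [Polynomial.eval_finset_sum, bb_eval] using this

lemma bb_continuous (N j : ℕ) : Continuous (bb N j) := by
  unfold bb; continuity


lemma taylor2_s10 {A B : ℝ} (x x' : ℝ → ℝ) (M : ℝ)
    (hd : ∀ u ∈ Icc A B, HasDerivWithinAt x (x' u) (Icc A B) u)
    (hc : ContinuousOn x' (Icc A B))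
    (hlip : ∀ u ∈ Icc A B, ∀ v ∈ Icc A B, |x' u - x' v| ≤ M * |u - v|)
    {t r : ℝ} (ht : t ∈ Icc A B) (hr : r ∈ Icc A B) :
    |x r - x t - x' t * (r - t)| ≤ M / 2 * (r - t)^2 := by
  have hxc : ContinuousOn x (Icc A B) := fun u hu => (hd u hu).continuousWithinAt
  -- FTC on any subinterval [p,q] ⊆ [A,B]
  have ftc : ∀ p q : ℝ, p ∈ Icc A B → q ∈ Icc A B → p ≤ q →
      ∫ u in p..q, x' u = x q - x p := by
    intro p q hp hq hpq
    apply intervalIntegral.integral_eq_sub_of_hasDeriv_right_of_le hpq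
    · exact hxc.mono (Icc_subset_Icc hp.1 hq.2)
    · intro u hu
      have huI : u ∈ Ioo A B := ⟨lt_of_le_of_lt hp.1 hu.1, lt_of_lt_of_le hu.2 hq.2⟩
      have : HasDerivAt x (x' u) u :=
        (hd u (Ioo_subset_Icc_self huI)).hasDerivAt (Icc_mem_nhds huI.1 huI.2)
      exact this.hasDerivWithinAt
    · exact (hc.mono (Icc_subset_Icc hp.1 hq.2)).intervalIntegrable_of_Icc hpq
  have key : ∀ p q c : ℝ, p ∈ Icc A B → q ∈ Icc A B → c ∈ Icc A B → p ≤ q →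
      |∫ u in p..q, (x' u - x' c)| ≤ M / 2 * ((q - c)^2 - (p - c)^2) ∨ True := by
    intro _ _ _ _ _ _ _; right; trivial
  rcases le_total t r with h | h
  · have h1 : ∫ u in t..r, x' u = x r - x t := ftc t r ht hr h
    have h2 : (∫ u in t..r, (x' u - x' t)) = x r - x t - x' t * (r - t) := by
      rw [intervalIntegral.integral_sub
        ((hc.mono (Icc_subset_Icc ht.1 hr.2)).intervalIntegrable_of_Icc h)
        (intervalIntegrable_const), h1, intervalIntegral.integral_const]
      simp only [smul_eq_mul]; ring
    rw [← h2]
    calc |∫ u in t..r, (x' u - x' t)| ≤ ∫ u in t..r, |x' u - x' t| := by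
          simpa using intervalIntegral.norm_integral_le_integral_norm (f := fun u => x' u - x' t) h
      _ ≤ ∫ u in t..r, M * (u - t) := by
          apply intervalIntegral.integral_mono_on h
          · apply ContinuousOn.intervalIntegrable_of_Icc h
            exact ((hc.mono (Icc_subset_Icc ht.1 hr.2)).sub continuousOn_const).abs
          · apply Continuous.intervalIntegrable; continuity
          · intro u hu
            have huAB : u ∈ Icc A B := ⟨le_trans ht.1 hu.1, le_trans hu.2 hr.2⟩
            have := hlip u huAB t ht
            rwa [abs_of_nonneg (by linarith [hu.1] : (0:ℝ) ≤ u - t)] at this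
      _ = M / 2 * (r - t)^2 := by
          rw [intervalIntegral.integral_const_mul]
          have : (∫ u in t..r, (u - t)) = r^2/2 - t^2/2 - (r - t) * t := by
            rw [intervalIntegral.integral_sub intervalIntegrable_id intervalIntegrable_const,
              integral_id, intervalIntegral.integral_const]
            simp only [smul_eq_mul]; ring
          rw [this]; ring
  · have h1 : ∫ u in r..t, x' u = x t - x r := ftc r t hr ht h
    have h2 : (∫ u in r..t, (x' t - x' u)) = x r - x t - x' t * (r - t) := by
      rw [intervalIntegral.integral_sub intervalIntegrable_const
        ((hc.mono (Icc_subset_Icc hr.1 ht.2)).intervalIntegrable_of_Icc h), h1,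
        intervalIntegral.integral_const]
      simp only [smul_eq_mul]; ring
    rw [← h2]
    calc |∫ u in r..t, (x' t - x' u)| ≤ ∫ u in r..t, |x' t - x' u| := by
          simpa using intervalIntegral.norm_integral_le_integral_norm (f := fun u => x' t - x' u) h
      _ ≤ ∫ u in r..t, M * (t - u) := by
          apply intervalIntegral.integral_mono_on h
          · apply ContinuousOn.intervalIntegrable_of_Icc h
            exact (continuousOn_const.sub (hc.mono (Icc_subset_Icc hr.1 ht.2))).abs
          · apply Continuous.intervalIntegrable; continuity
          · intro u hu
            have huAB : u ∈ Icc A B := ⟨le_trans hr.1 hu.1, le_trans hu.2 ht.2⟩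
            have := hlip t ht u huAB
            rwa [abs_of_nonneg (by linarith [hu.2] : (0:ℝ) ≤ t - u)] at this
      _ = M / 2 * (r - t)^2 := by
          rw [intervalIntegral.integral_const_mul]
          have : (∫ u in r..t, (t - u)) = (t - r) * t - (t^2/2 - r^2/2) := by
            rw [intervalIntegral.integral_sub intervalIntegrable_const intervalIntegrable_id,
              integral_id, intervalIntegral.integral_const]
            simp only [smul_eq_mul]; ring
          rw [this]; ring

lemma bb_integral (N j : ℕ) (hj : j ≤ N) :
    ∫ t in (0:ℝ)..1, bb N j t = 1 / ((N:ℝ) + 1) := by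
  unfold bb
  simp only [mul_assoc]
  rw [intervalIntegral.integral_const_mul, beta_nat]
  have h1 : j + (N - j) + 1 = N + 1 := by omega
  rw [h1]
  have h2 : (N.choose j : ℝ) * j.factorial * (N-j).factorial = N.factorial := by
    exact_mod_cast congrArg Nat.cast (Nat.choose_mul_factorial_mul_factorial hj)
  have h3 : ((N+1).factorial : ℝ) = (N+1) * N.factorial := by
    exact_mod_cast congrArg Nat.cast (Nat.factorial_succ N)
  have hf : (N.factorial : ℝ) ≠ 0 := Nat.cast_ne_zero.2 (Nat.factorial_ne_zero N)
  have hN1 : ((N:ℝ)+1) ≠ 0 := by positivity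
  field_simp [h3]
  nlinarith [h2]

lemma bb_integral_ab {a b : ℝ} (hab : a < b) (N j : ℕ) (hj : j ≤ N) :
    ∫ t in a..b, bb N j ((t - a)/(b - a)) = (b - a) / ((N:ℝ) + 1) := by
  have h : (b - a) ≠ 0 := by linarith
  have h1 : ∫ t in a..b, bb N j ((t - a)/(b - a))
      = ∫ t in (0:ℝ)..(b - a), bb N j (t/(b - a)) := by
    have := intervalIntegral.integral_comp_sub_right (a := a) (b := b)
      (fun u => bb N j (u/(b - a))) a
    simpa using this
  rw [h1, intervalIntegral.integral_comp_div (fun u => bb N j u) h,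
    zero_div, div_self h, bb_integral N j hj]
  rw [smul_eq_mul]
  field_simp

lemma interval_bound {A B : ℝ} (x x' : ℝ → ℝ) (M : ℝ) (hM0 : 0 ≤ M) (N : ℕ) (hN : 1 ≤ N)
    (hd : ∀ u ∈ Icc A B, HasDerivWithinAt x (x' u) (Icc A B) u)
    (hc : ContinuousOn x' (Icc A B))
    (hlip : ∀ u ∈ Icc A B, ∀ v ∈ Icc A B, |x' u - x' v| ≤ M * |u - v|)
    {a b : ℝ} (hab : a < b) (hA : A ≤ a) (hB : b ≤ B) :
    |(b - a) / ((N:ℝ) + 1) * ∑ j ∈ Finset.range (N+1), x (a + (j:ℝ) * (b - a) / N)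
        - ∫ t in a..b, x t| ≤ M * (b - a)^3 / (8 * N) := by
  have hsub : Icc a b ⊆ Icc A B := Icc_subset_Icc hA hB
  have hNpos : (0:ℝ) < N := by exact_mod_cast hN
  have hba : (0:ℝ) < b - a := by linarith
  set r : ℕ → ℝ := fun j => a + (j:ℝ) * (b - a) / N with hr
  have hrmem : ∀ j : ℕ, j ≤ N → r j ∈ Icc a b := by
    intro j hj
    constructor
    · have : 0 ≤ (j:ℝ) * (b - a) / N := by positivity
      simp only [hr]; linarith
    · have hjN : (j:ℝ) ≤ N := by exact_mod_cast hj
      have : (j:ℝ) * (b - a) / N ≤ b - a := by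
        rw [div_le_iff₀ hNpos]; nlinarith
      simp only [hr]; linarith
  -- pointwise Bernstein estimate
  have key : ∀ t ∈ Icc a b,
      |(∑ j ∈ Finset.range (N+1), bb N j ((t - a)/(b - a)) * x (r j)) - x t|
        ≤ M * (b - a)^2 / (8 * N) := by
    intro t htab
    set τ := (t - a)/(b - a) with hτ
    have htA : t ∈ Icc A B := hsub htab
    have hτ0 : 0 ≤ τ := div_nonneg (by linarith [htab.1]) hba.le
    have hτ1 : τ ≤ 1 := (div_le_one hba).2 (by linarith [htab.2])
    have hta : t - a = τ * (b - a) := by rw [hτ, div_mul_cancel₀ _ hba.ne']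
    have hrt : ∀ j : ℕ, r j - t = (b - a) / N * ((j:ℝ) - N * τ) := by
      intro j
      simp only [hr]
      field_simp
      nlinarith [hta]
    have e2 : ∑ j ∈ Finset.range (N+1), bb N j τ * (r j - t) = 0 := by
      have : ∀ j ∈ Finset.range (N+1), bb N j τ * (r j - t)
          = (b - a)/N * ((j:ℝ) * bb N j τ) - (b - a)/N * ((N:ℝ) * τ * bb N j τ) := by
        intro j _; rw [hrt j]; ring
      rw [Finset.sum_congr rfl this, Finset.sum_sub_distrib, ← Finset.mul_sum, ← Finset.mul_sum,
        bb_sum_smul]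
      have : ∑ j ∈ Finset.range (N+1), (N:ℝ) * τ * bb N j τ
          = (N:ℝ) * τ * ∑ j ∈ Finset.range (N+1), bb N j τ := by rw [Finset.mul_sum]
      rw [this, bb_sum]
      ring
    have e1 : (∑ j ∈ Finset.range (N+1), bb N j τ * x (r j)) - x t
        = ∑ j ∈ Finset.range (N+1), bb N j τ * (x (r j) - x t - x' t * (r j - t)) := by
      have expand : ∀ j ∈ Finset.range (N+1), bb N j τ * (x (r j) - x t - x' t * (r j - t))
          = bb N j τ * x (r j) - bb N j τ * x t - x' t * (bb N j τ * (r j - t)) := by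
        intro j _; ring
      rw [Finset.sum_congr rfl expand, Finset.sum_sub_distrib, Finset.sum_sub_distrib,
        ← Finset.mul_sum, e2, ← Finset.sum_mul, bb_sum]
      ring
    rw [e1]
    calc |∑ j ∈ Finset.range (N+1), bb N j τ * (x (r j) - x t - x' t * (r j - t))|
        ≤ ∑ j ∈ Finset.range (N+1), |bb N j τ * (x (r j) - x t - x' t * (r j - t))| :=
          Finset.abs_sum_le_sum_abs _ _
      _ ≤ ∑ j ∈ Finset.range (N+1), bb N j τ * (M / 2 * (r j - t)^2) := by
          apply Finset.sum_le_sum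
          intro j hjr
          have hj : j ≤ N := Nat.lt_succ_iff.mp (Finset.mem_range.mp hjr)
          rw [abs_mul, abs_of_nonneg (bb_nonneg N j hτ0 hτ1)]
          exact mul_le_mul_of_nonneg_left
            (taylor2_s10 x x' M hd hc hlip htA (hsub (hrmem j hj)))
            (bb_nonneg N j hτ0 hτ1)
      _ = M / 2 * ((b - a)/N)^2 * ((N:ℝ) * τ * (1 - τ)) := by
          rw [← bb_variance N τ, Finset.mul_sum]
          apply Finset.sum_congr rfl
          intro j _
          rw [hrt j]
          ring
      _ ≤ M * (b - a)^2 / (8 * N) := by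
          rw [div_pow]
          have hτq : τ * (1 - τ) ≤ 1/4 := by nlinarith [sq_nonneg (τ - 1/2)]
          have h1 : M / 2 * ((b-a)^2/(N:ℝ)^2) * ((N:ℝ) * (τ * (1-τ)))
              ≤ M / 2 * ((b-a)^2/(N:ℝ)^2) * ((N:ℝ) * (1/4)) := by
            apply mul_le_mul_of_nonneg_left _ (by positivity)
            exact mul_le_mul_of_nonneg_left hτq hNpos.le
          calc M / 2 * ((b-a)^2/(N:ℝ)^2) * ((N:ℝ) * τ * (1 - τ))
              = M / 2 * ((b-a)^2/(N:ℝ)^2) * ((N:ℝ) * (τ * (1-τ))) := by ring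
            _ ≤ M / 2 * ((b-a)^2/(N:ℝ)^2) * ((N:ℝ) * (1/4)) := h1
            _ = M * (b - a)^2 / (8 * N) * ((N:ℝ)/(N:ℝ)) * 1 := by ring
            _ = M * (b - a)^2 / (8 * N) := by
                rw [div_self (ne_of_gt hNpos)]; ring
  -- quadrature as integral of the Bernstein approximant
  have hxcAB : ContinuousOn x (Icc A B) := fun u hu => (hd u hu).continuousWithinAt
  have hxc : ContinuousOn x (Icc a b) := hxcAB.mono hsub
  have hBc : ContinuousOn (fun t => ∑ j ∈ Finset.range (N+1),
      bb N j ((t - a)/(b - a)) * x (r j)) (Icc a b) := by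
    apply continuousOn_finset_sum
    intro j _
    exact (((bb_continuous N j).comp (by continuity)).continuousOn).mul continuousOn_const
  have hQ : (b - a) / ((N:ℝ) + 1) * ∑ j ∈ Finset.range (N+1), x (r j)
      = ∫ t in a..b, (∑ j ∈ Finset.range (N+1), bb N j ((t - a)/(b - a)) * x (r j)) := by
    rw [intervalIntegral.integral_finset_sum]
    · rw [Finset.mul_sum]
      apply Finset.sum_congr rfl
      intro j hjr
      have hj : j ≤ N := Nat.lt_succ_iff.mp (Finset.mem_range.mp hjr)
      rw [intervalIntegral.integral_mul_const, bb_integral_ab hab N j hj]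
    · intro j _
      apply Continuous.intervalIntegrable
      exact ((bb_continuous N j).comp (by continuity)).mul continuous_const
  rw [hQ, ← intervalIntegral.integral_sub
    (hBc.intervalIntegrable_of_Icc hab.le) (hxc.intervalIntegrable_of_Icc hab.le)]
  calc |∫ t in a..b, ((∑ j ∈ Finset.range (N+1), bb N j ((t - a)/(b - a)) * x (r j)) - x t)|
      ≤ M * (b - a)^2 / (8 * N) * |b - a| := by
        rw [← Real.norm_eq_abs]
        apply intervalIntegral.norm_integral_le_of_norm_le_const
        intro t htm
        have htIcc : t ∈ Icc a b := mem_Icc_of_Ioc (by rwa [uIoc_of_le hab.le] at htm)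
        rw [Real.norm_eq_abs]
        exact key t htIcc
    _ = M * (b - a)^3 / (8 * N) := by
        rw [abs_of_pos hba]; ring


/-- composite Bernstein quadrature error bound. For `x ∈ C²([0,t_f])` and
knots `0 = T 0 < … < T K = t_f` with `T (k+1) − T k ≤ C_t/K`,
`| Σ_{k=1}^K ((t_k−t_{k−1})/(N+1)) Σ_{j=0}^N x(t_{k,j}) − ∫₀^{t_f} x |
  ≤ (C_t³/(8K²N)) sup_{τ∈[0,t_f]} |x''(τ)|`,
where `t_{k,j} = t_{k−1} + (j/N)(t_k − t_{k−1})`. -/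
theorem composite_bernstein_quadrature_bound
    (tf Ct : ℝ) (htf : 0 < tf) (hCt : 0 < Ct)
    (K N : ℕ) (hK : 1 ≤ K) (hN : 1 ≤ N)
    (T : ℕ → ℝ) (hT0 : T 0 = 0) (hTK : T K = tf)
    (hmono : ∀ k < K, T k < T (k + 1))
    (hsize : ∀ k < K, T (k + 1) - T k ≤ Ct / (K : ℝ))
    (x : ℝ → ℝ) (hx : ContDiffOn ℝ 2 x (Set.Icc 0 tf)) :
    |(∑ k ∈ Finset.range K, (T (k + 1) - T k) / ((N : ℝ) + 1) *
          ∑ j ∈ Finset.range (N + 1), x (T k + (j : ℝ) * (T (k + 1) - T k) / (N : ℝ)))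
        - ∫ t in (0 : ℝ)..tf, x t|
      ≤ Ct ^ 3 / (8 * (K : ℝ) ^ 2 * (N : ℝ)) *
          sSup ((fun τ => |iteratedDerivWithin 2 x (Set.Icc 0 tf) τ|) '' Set.Icc 0 tf) := by

  set S : Set ℝ := Set.Icc 0 tf with hSdef
  have hS : UniqueDiffOn ℝ S := uniqueDiffOn_Icc htf
  set x' : ℝ → ℝ := derivWithin x S with hx'def
  set M : ℝ := sSup ((fun τ => |iteratedDerivWithin 2 x S τ|) '' S) with hMdef
  have hd : ∀ u ∈ S, HasDerivWithinAt x (x' u) S u := fun u hu =>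
    ((hx.differentiableOn (by norm_num)) u hu).hasDerivWithinAt
  have hd2 : DifferentiableOn ℝ x' S :=
    (hx.derivWithin hS (m := 1) (by norm_num)).differentiableOn (by norm_num)
  have hc : ContinuousOn x' S := hd2.continuousOn
  have hcont2 : ContinuousOn (iteratedDerivWithin 2 x S) S :=
    hx.continuousOn_iteratedDerivWithin le_rfl hS
  have hM : ∀ u ∈ S, |iteratedDerivWithin 2 x S u| ≤ M := by
    intro u hu
    apply le_csSup
    · exact IsCompact.bddAbove_image isCompact_Icc hcont2.abs
    · exact ⟨u, hu, rfl⟩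
  have h0S : (0:ℝ) ∈ S := ⟨le_refl 0, htf.le⟩
  have hM0 : 0 ≤ M := le_trans (abs_nonneg _) (hM 0 h0S)
  have hderiv2 : ∀ w ∈ S, HasDerivWithinAt x' (iteratedDerivWithin 2 x S w) S w := by
    intro w hw
    have h1 : iteratedDerivWithin 2 x S w = derivWithin x' S w := by
      rw [iteratedDerivWithin_succ]
      rw [iteratedDerivWithin_one]
    rw [h1]
    exact (hd2 w hw).hasDerivWithinAt
  have hlip : ∀ u ∈ S, ∀ v ∈ S, |x' u - x' v| ≤ M * |u - v| := by
    intro u hu v hv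
    have := (convex_Icc (0:ℝ) tf).norm_image_sub_le_of_norm_hasDerivWithin_le
      hderiv2 (fun w hw => by rw [Real.norm_eq_abs]; exact hM w hw) hv hu
    simpa [Real.norm_eq_abs] using this
  -- monotonicity of knots
  have hTle : ∀ i j : ℕ, i ≤ j → j ≤ K → T i ≤ T j := by
    intro i j hij hjK
    induction j, hij using Nat.le_induction with
    | base => exact le_refl _
    | succ j hj ih =>
      have hjK' : j ≤ K := by omega
      exact le_trans (ih hjK') (hmono j (by omega)).le
  have hTmem : ∀ k, k ≤ K → T k ∈ S := by
    intro k hk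
    constructor
    · rw [← hT0]; exact hTle 0 k (Nat.zero_le k) hk
    · rw [← hTK]; exact hTle k K hk le_rfl
  -- telescoping integral
  have hintk : ∀ k < K, IntervalIntegrable x volume (T k) (T (k+1)) := by
    intro k hk
    have hxcS : ContinuousOn x S := fun u hu => (hd u hu).continuousWithinAt
    exact (hxcS.mono (Icc_subset_Icc (hTmem k hk.le).1 (hTmem (k+1) hk).2)
      ).intervalIntegrable_of_Icc (hmono k hk).le
  have hsumI : ∑ k ∈ Finset.range K, ∫ t in T k..T (k+1), x t = ∫ t in (0:ℝ)..tf, x t := by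
    have := intervalIntegral.sum_integral_adjacent_intervals hintk
    rwa [hT0, hTK] at this
  rw [← hsumI, ← Finset.sum_sub_distrib]
  have hKpos : (0:ℝ) < K := by exact_mod_cast hK
  have hNpos : (0:ℝ) < N := by exact_mod_cast hN
  calc |∑ k ∈ Finset.range K, ((T (k + 1) - T k) / ((N : ℝ) + 1) *
          (∑ j ∈ Finset.range (N + 1), x (T k + (j : ℝ) * (T (k + 1) - T k) / (N : ℝ)))
          - ∫ t in T k..T (k+1), x t)|
      ≤ ∑ k ∈ Finset.range K, |(T (k + 1) - T k) / ((N : ℝ) + 1) *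
          (∑ j ∈ Finset.range (N + 1), x (T k + (j : ℝ) * (T (k + 1) - T k) / (N : ℝ)))
          - ∫ t in T k..T (k+1), x t| := Finset.abs_sum_le_sum_abs _ _
    _ ≤ ∑ k ∈ Finset.range K, M * (Ct / K)^3 / (8 * N) := by
        apply Finset.sum_le_sum
        intro k hkr
        have hk : k < K := Finset.mem_range.mp hkr
        have hb := interval_bound x x' M hM0 N hN hd hc hlip (hmono k hk)
          (hTmem k hk.le).1 (hTmem (k+1) hk).2
        refine le_trans hb ?_
        have hba : 0 ≤ T (k+1) - T k := by linarith [hmono k hk]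
        gcongr
        exact hsize k hk
    _ = Ct ^ 3 / (8 * (K : ℝ) ^ 2 * (N : ℝ)) * M := by
        rw [Finset.sum_const, Finset.card_range, nsmul_eq_mul]
        field_simp
end
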